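/- arXiv:1304.5648 — 2 statements merged into one kernel-verified Lean document; each statement's English description precedes it below -/
import Mathlib

section
/- Let G be a finite group and M a Mackey functor over G. The unique map of Tambara functors A → T(M) (where A is the Burnside Mackey functor, the initial Tambara functor) induces an isomorphism A ≅ T^0(M), and the universal map θ_M : M → T(M) induces an isomorphism of Mackey functors M ≅ T^1(M), where T(M) = ⊕_{n∈ℕ} T^n(M). -/
set_option autoImplicit false

namespace Tamb

variable {G : Type} [Group G]

/-- A function between `G`-sets is equivariant. -/
def IsEquivariant (G : Type) [Group G] {A B : Type} [SMul G A] [SMul G B] (f : A → B) : Prop :=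
  ∀ (g : G) (a : A), f (g • a) = g • f a

section Maps

variable {X Y Z : Type} [MulAction G X] [MulAction G Y] [MulAction G Z]

/-- The identity equivariant map. -/
def gid (G X : Type) [Group G] [MulAction G X] : X →[G] X :=
  ⟨fun x => x, fun _ _ => rfl⟩

@[simp] theorem gid_apply (x : X) : gid G X x = x := rfl

/-- Composition of equivariant maps. -/
def gcomp (j : Y →[G] Z) (i : X →[G] Y) : X →[G] Z :=
  ⟨fun x => j (i x), fun g x => by
    show j (i (g • x)) = g • j (i x)
    rw [MulActionHom.map_smul, MulActionHom.map_smul]⟩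

@[simp] theorem gcomp_apply (j : Y →[G] Z) (i : X →[G] Y) (x : X) : gcomp j i x = j (i x) := rfl

/-- The pullback of two equivariant maps of `G`-sets. -/
def Pb (f : X →[G] Z) (g : Y →[G] Z) : Type := {p : X × Y // f p.1 = g p.2}

namespace Pb

variable (f : X →[G] Z) (g : Y →[G] Z)

instance : SMul G (Pb f g) :=
  ⟨fun a p => ⟨(a • p.1.1, a • p.1.2), by
    rw [MulActionHom.map_smul, MulActionHom.map_smul, p.2]⟩⟩

instance : MulAction G (Pb f g) where
  one_smul p := Subtype.ext (Prod.ext (one_smul _ _) (one_smul _ _))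
  mul_smul a b p := Subtype.ext (Prod.ext (mul_smul _ _ _) (mul_smul _ _ _))

instance [Finite X] [Finite Y] : Finite (Pb f g) := Subtype.finite

/-- First projection of a pullback. -/
def fstHom : Pb f g →[G] X := ⟨fun p => p.1.1, fun _ _ => rfl⟩
/-- Second projection of a pullback. -/
def sndHom : Pb f g →[G] Y := ⟨fun p => p.1.2, fun _ _ => rfl⟩

@[simp] theorem fstHom_apply (p : Pb f g) : fstHom f g p = p.1.1 := rfl
@[simp] theorem sndHom_apply (p : Pb f g) : sndHom f g p = p.1.2 := rfl

end Pb

/-- `Sec i j` is the set `∏_{i,j} X` of sections of `i : X → Y` defined on fibers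
of `j : Y → Z`: an element is a point `z : Z` together with a section of `i`
defined on `j⁻¹(z)`. -/
structure Sec (i : X →[G] Y) (j : Y →[G] Z) where
  pt : Z
  sec : ∀ y : Y, j y = pt → X
  isSec : ∀ (y : Y) (h : j y = pt), i (sec y h) = y

namespace Sec

variable {i : X →[G] Y} {j : Y →[G] Z}

theorem ext' {σ τ : Sec i j} (h1 : σ.pt = τ.pt)
    (h2 : ∀ (y : Y) (h : j y = σ.pt) (h' : j y = τ.pt), σ.sec y h = τ.sec y h') : σ = τ := by
  obtain ⟨p, s, hs⟩ := σ
  obtain ⟨p', s', hs'⟩ := τ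
  dsimp at h1
  subst h1
  have hss : s = s' := by
    funext y hy
    exact h2 y hy hy
  subst hss
  rfl

theorem sec_congr (σ : Sec i j) {y y' : Y} (e : y = y') {h : j y = σ.pt} {h' : j y' = σ.pt} :
    σ.sec y h = σ.sec y' h' := by subst e; rfl

instance : SMul G (Sec i j) :=
  ⟨fun a σ =>
    { pt := a • σ.pt
      sec := fun y h => a • σ.sec (a⁻¹ • y) (by rw [MulActionHom.map_smul, h, inv_smul_smul])
      isSec := fun y h => by
        rw [MulActionHom.map_smul, σ.isSec, smul_inv_smul] }⟩

@[simp] theorem smul_pt (a : G) (σ : Sec i j) : (a • σ).pt = a • σ.pt := rfl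

theorem smul_sec (a : G) (σ : Sec i j) (y : Y) (h : j y = (a • σ).pt)
    (h' : j (a⁻¹ • y) = σ.pt) : (a • σ).sec y h = a • σ.sec (a⁻¹ • y) h' := rfl

instance : MulAction G (Sec i j) where
  one_smul σ := by
    refine ext' (one_smul _ _) (fun y h h' => ?_)
    have h'' : j ((1 : G)⁻¹ • y) = σ.pt := by rw [inv_one, one_smul]; exact h'
    rw [smul_sec 1 σ y h h'', one_smul]
    exact sec_congr σ (by rw [inv_one, one_smul])
  mul_smul a b σ := by
    refine ext' (mul_smul _ _ _) (fun y h h' => ?_)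
    have h1 : j ((a * b)⁻¹ • y) = σ.pt := by
      rw [MulActionHom.map_smul, h]
      exact inv_smul_smul _ _
    have h2 : j (a⁻¹ • y) = (b • σ).pt := by
      rw [MulActionHom.map_smul, h']
      show a⁻¹ • (a • (b • σ).pt) = _
      exact inv_smul_smul _ _
    have h3 : j (b⁻¹ • (a⁻¹ • y)) = σ.pt := by
      rw [MulActionHom.map_smul, h2]
      exact inv_smul_smul _ _
    rw [smul_sec (a * b) σ y h h1, smul_sec a (b • σ) y h' h2, smul_sec b σ (a⁻¹ • y) h2 h3,
      mul_smul]
    exact congrArg (a • ·) (congrArg (b • ·) (sec_congr σ (by rw [mul_inv_rev, mul_smul])))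

instance optionFinite {X : Type} [Finite X] : Finite (Option X) :=
  Finite.of_equiv (X ⊕ PUnit.{1}) (Equiv.optionEquivSumPUnit.{0,0} X).symm

instance [Finite X] [Finite Y] [Finite Z] : Finite (Sec i j) := by
  classical
  have hF : Function.Injective (fun σ : Sec i j =>
      ((σ.pt, fun y => if h : j y = σ.pt then some (σ.sec y h) else none) :
        Z × (Y → Option X))) := by
    intro σ τ he
    have h1 : σ.pt = τ.pt := congrArg Prod.fst he
    refine ext' h1 (fun y hy hy' => ?_)
    have h2 := congrFun (congrArg Prod.snd he) y
    dsimp only at h2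
    rw [dif_pos hy, dif_pos hy'] at h2
    exact Option.some_injective _ h2
  exact Finite.of_injective _ hF

end Sec

/-- The canonical projection `∏_{i,j} X → Z`. -/
def pHom (i : X →[G] Y) (j : Y →[G] Z) : Sec i j →[G] Z :=
  ⟨fun σ => σ.pt, fun _ _ => rfl⟩

@[simp] theorem pHom_apply (i : X →[G] Y) (j : Y →[G] Z) (σ : Sec i j) :
    pHom i j σ = σ.pt := rfl

/-- The canonical pullback `Y ×_Z ∏_{i,j} X`. -/
abbrev ECan (i : X →[G] Y) (j : Y →[G] Z) : Type := Pb j (pHom i j)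

/-- The evaluation map `e : Y ×_Z ∏_{i,j} X → X`. -/
def eval (i : X →[G] Y) (j : Y →[G] Z) : ECan i j → X := fun q => q.1.2.sec q.1.1 q.2

theorem eval_smul (i : X →[G] Y) (j : Y →[G] Z) (a : G) (q : ECan i j) :
    eval i j (a • q) = a • eval i j q := by
  have h1 : j (a • q.1.1) = (a • q.1.2).pt := by
    rw [MulActionHom.map_smul, q.2]; rfl
  have h2 : j (a⁻¹ • (a • q.1.1)) = q.1.2.pt := by rw [inv_smul_smul]; exact q.2
  calc eval i j (a • q) = (a • q.1.2).sec (a • q.1.1) h1 := rfl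
    _ = a • q.1.2.sec (a⁻¹ • (a • q.1.1)) h2 := Sec.smul_sec _ _ _ _ _
    _ = a • q.1.2.sec q.1.1 q.2 := congrArg (a • ·) (Sec.sec_congr _ (inv_smul_smul a q.1.1))

/-- The evaluation map as an equivariant map. -/
def evalHom (i : X →[G] Y) (j : Y →[G] Z) : ECan i j →[G] X :=
  ⟨eval i j, eval_smul i j⟩

/-- The projection `π₂ : Y ×_Z ∏_{i,j} X → ∏_{i,j} X` of the canonical exponential diagram. -/
def pi2Hom (i : X →[G] Y) (j : Y →[G] Z) : ECan i j →[G] Sec i j :=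
  Pb.sndHom j (pHom i j)

end Maps

/-- `(f, g, h)` is a distributor for `(i, j)`: the diagram with bottom row
`X →i Y →j Z`, top row `g : A → B`, left vertical `f : A → X` and right vertical
`h : B → Z` is an exponential diagram, i.e. it is isomorphic (by equivariant
bijections fixing the bottom row) to the canonical diagram built from `∏_{i,j} X`. -/
def IsDistributor {X Y Z A B : Type} [MulAction G X] [MulAction G Y] [MulAction G Z]
    [MulAction G A] [MulAction G B]
    (i : X →[G] Y) (j : Y →[G] Z) (f : A →[G] X) (g : A →[G] B) (h : B →[G] Z) : Prop :=
  ∃ (α : A ≃ ECan i j) (β : B ≃ Sec i j),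
    IsEquivariant G ⇑α ∧ IsEquivariant G ⇑β ∧
    (∀ a, eval i j (α a) = f a) ∧
    (∀ a, β (g a) = (α a).1.2) ∧
    (∀ b, (β b).pt = h b)
section CoreB

/-- A (bundled) finite `G`-set. -/
structure FinGSet (G : Type) [Group G] : Type 1 where
  carrier : Type
  [fin : Finite carrier]
  [act : MulAction G carrier]

attribute [instance] FinGSet.fin FinGSet.act

instance : MulAction G Empty where
  smul _ e := e.elim
  one_smul e := e.elim
  mul_smul _ _ e := e.elim

/-- Bundle a finite `G`-set. -/
def mkG (G : Type) [Group G] (A : Type) [MulAction G A] [Finite A] : FinGSet G := ⟨A⟩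

/-- The empty `G`-set. -/
def emptyG (G : Type) [Group G] : FinGSet G := ⟨Empty⟩
/-- The one-point `G`-set (`G/G`). -/
def ptG (G : Type) [Group G] : FinGSet G := ⟨PUnit⟩
/-- Binary coproduct of finite `G`-sets. -/
def sumG (X Y : FinGSet G) : FinGSet G := ⟨X.carrier ⊕ Y.carrier⟩
/-- Binary product of finite `G`-sets. -/
def prodG (X Y : FinGSet G) : FinGSet G := ⟨X.carrier × Y.carrier⟩

def initHom (X : FinGSet G) : (emptyG G).carrier →[G] X.carrier :=
  ⟨fun e => e.elim, fun _ e => e.elim⟩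
def toPtHom (X : FinGSet G) : X.carrier →[G] (ptG G).carrier :=
  ⟨fun _ => PUnit.unit, fun _ _ => rfl⟩
def inlHom (X Y : FinGSet G) : X.carrier →[G] (sumG X Y).carrier :=
  ⟨Sum.inl, fun _ _ => rfl⟩
def inrHom (X Y : FinGSet G) : Y.carrier →[G] (sumG X Y).carrier :=
  ⟨Sum.inr, fun _ _ => rfl⟩
def sumMapHom {X Y X' Y' : FinGSet G} (f : X.carrier →[G] X'.carrier)
    (g : Y.carrier →[G] Y'.carrier) : (sumG X Y).carrier →[G] (sumG X' Y').carrier :=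
  ⟨Sum.map f g, fun a x => by
    cases x with
    | inl v => show Sum.inl (f (a • v)) = Sum.inl (a • f v); rw [MulActionHom.map_smul]
    | inr v => show Sum.inr (g (a • v)) = Sum.inr (a • g v); rw [MulActionHom.map_smul]⟩
def sumElimHom {X Y Z : FinGSet G} (f : X.carrier →[G] Z.carrier)
    (g : Y.carrier →[G] Z.carrier) : (sumG X Y).carrier →[G] Z.carrier :=
  ⟨Sum.elim f g, fun a x => by
    cases x with
    | inl v => show f (a • v) = a • f v; rw [MulActionHom.map_smul]
    | inr v => show g (a • v) = a • g v; rw [MulActionHom.map_smul]⟩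
/-- The fold map `X ⊔ X → X`. -/
def foldHom (X : FinGSet G) : (sumG X X).carrier →[G] X.carrier :=
  sumElimHom (gid G X.carrier) (gid G X.carrier)
def prodMapHom {X Y X' Y' : FinGSet G} (f : X.carrier →[G] X'.carrier)
    (g : Y.carrier →[G] Y'.carrier) : (prodG X Y).carrier →[G] (prodG X' Y').carrier :=
  ⟨Prod.map f g, fun a x => Prod.ext (MulActionHom.map_smul f a x.1) (MulActionHom.map_smul g a x.2)⟩
def pi1Hom (X Y : FinGSet G) : (prodG X Y).carrier →[G] X.carrier :=
  ⟨Prod.fst, fun _ _ => rfl⟩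
def pi2ProdHom (X Y : FinGSet G) : (prodG X Y).carrier →[G] Y.carrier :=
  ⟨Prod.snd, fun _ _ => rfl⟩

/-- A semi-Mackey functor over `G` (with set values): restrictions and transfers,
functorial, converting coproducts into products, and satisfying the pullback
(Mackey double coset) condition. -/
structure SemiMackey (G : Type) [Group G] : Type 2 where
  obj : FinGSet G → Type 1
  nonempty : ∀ X, Nonempty (obj X)
  res : ∀ {X Y : FinGSet G}, (X.carrier →[G] Y.carrier) → obj Y → obj X
  tr : ∀ {X Y : FinGSet G}, (X.carrier →[G] Y.carrier) → obj X → obj Y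
  res_id : ∀ {X : FinGSet G} (x : obj X), res (gid G X.carrier) x = x
  res_comp : ∀ {X Y Z : FinGSet G} (i : X.carrier →[G] Y.carrier)
    (j : Y.carrier →[G] Z.carrier) (z : obj Z), res i (res j z) = res (gcomp j i) z
  tr_id : ∀ {X : FinGSet G} (x : obj X), tr (gid G X.carrier) x = x
  tr_comp : ∀ {X Y Z : FinGSet G} (i : X.carrier →[G] Y.carrier)
    (j : Y.carrier →[G] Z.carrier) (x : obj X), tr j (tr i x) = tr (gcomp j i) x
  mackey : ∀ {X Y Z : FinGSet G} (j : X.carrier →[G] Z.carrier)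
    (i : Y.carrier →[G] Z.carrier) (y : obj Y),
    res j (tr i y) =
      tr (X := mkG G (Pb j i)) (Pb.fstHom j i) (res (X := mkG G (Pb j i)) (Pb.sndHom j i) y)
  sum_bij : ∀ (X Y : FinGSet G),
    Function.Bijective (fun z : obj (sumG X Y) => (res (inlHom X Y) z, res (inrHom X Y) z))
  empty_subsingleton : Subsingleton (obj (emptyG G))

/-- A semi-Tambara functor over `G`: a semi-Mackey functor with multiplicative
norms, commuting with restrictions over pullbacks and satisfying the
distributive law over exponential diagrams. -/
structure SemiTambara (G : Type) [Group G] extends SemiMackey G : Type 2 where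
  nm : ∀ {X Y : FinGSet G}, (X.carrier →[G] Y.carrier) → obj X → obj Y
  nm_id : ∀ {X : FinGSet G} (x : obj X), nm (gid G X.carrier) x = x
  nm_comp : ∀ {X Y Z : FinGSet G} (i : X.carrier →[G] Y.carrier)
    (j : Y.carrier →[G] Z.carrier) (x : obj X), nm j (nm i x) = nm (gcomp j i) x
  nm_res : ∀ {X Y Z : FinGSet G} (j : X.carrier →[G] Z.carrier)
    (i : Y.carrier →[G] Z.carrier) (y : obj Y),
    res j (nm i y) =
      nm (X := mkG G (Pb j i)) (Pb.fstHom j i) (res (X := mkG G (Pb j i)) (Pb.sndHom j i) y)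
  distrib : ∀ {X Y Z A B : FinGSet G} (i : X.carrier →[G] Y.carrier)
    (j : Y.carrier →[G] Z.carrier) (f : A.carrier →[G] X.carrier)
    (g : A.carrier →[G] B.carrier) (h : B.carrier →[G] Z.carrier),
    IsDistributor i j f g h → ∀ x : obj X, nm j (tr i x) = tr h (nm g (res f x))

/-- The element of `M(X ⊔ Y)` corresponding to a pair `(x, y)`. -/
noncomputable def SemiMackey.pairElt (M : SemiMackey G) {X Y : FinGSet G}
    (x : M.obj X) (y : M.obj Y) : M.obj (sumG X Y) :=
  (Equiv.ofBijective _ (M.sum_bij X Y)).symm (x, y)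

/-- The addition on `M(X)` induced by transfer along the fold map. -/
noncomputable def SemiMackey.add (M : SemiMackey G) {X : FinGSet G} (x y : M.obj X) : M.obj X :=
  M.tr (foldHom X) (M.pairElt x y)

/-- The zero of `M(X)`: the transfer of the unique element of `M(∅)`. -/
noncomputable def SemiMackey.zero (M : SemiMackey G) (X : FinGSet G) : M.obj X :=
  M.tr (initHom X) (M.nonempty (emptyG G)).some

/-- The multiplication on `R(X)` induced by the norm along the fold map. -/
noncomputable def SemiTambara.mul (R : SemiTambara G) {X : FinGSet G} (x y : R.obj X) :
    R.obj X :=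
  R.nm (foldHom X) (R.toSemiMackey.pairElt x y)

/-- The multiplicative unit of `R(X)`: the norm of the unique element of `R(∅)`. -/
noncomputable def SemiTambara.one (R : SemiTambara G) (X : FinGSet G) : R.obj X :=
  R.nm (initHom X) (R.nonempty (emptyG G)).some

/-- A Mackey functor: a semi-Mackey functor all of whose values are abelian
groups under the transfer-induced addition. -/
structure Mackey (G : Type) [Group G] extends SemiMackey G : Type 2 where
  hasNeg : ∀ (X : FinGSet G) (x : obj X), ∃ y, toSemiMackey.add x y = toSemiMackey.zero X

/-- A Tambara functor: a semi-Tambara functor all of whose values are abelian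
groups under the transfer-induced addition. -/
structure Tambara (G : Type) [Group G] extends SemiTambara G : Type 2 where
  hasNeg : ∀ (X : FinGSet G) (x : obj X),
    ∃ y, toSemiMackey.add x y = toSemiMackey.zero X

/-- A map of semi-Mackey functors. -/
structure SMackHom {G : Type} [Group G] (M N : SemiMackey G) : Type 1 where
  app : ∀ X, M.obj X → N.obj X
  app_res : ∀ {X Y : FinGSet G} (f : X.carrier →[G] Y.carrier) (y : M.obj Y),
    app X (M.res f y) = N.res f (app Y y)
  app_tr : ∀ {X Y : FinGSet G} (f : X.carrier →[G] Y.carrier) (x : M.obj X),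
    app Y (M.tr f x) = N.tr f (app X x)

/-- A map of semi-Tambara functors. -/
structure STambHom {G : Type} [Group G] (M N : SemiTambara G) extends
    SMackHom M.toSemiMackey N.toSemiMackey : Type 1 where
  app_nm : ∀ {X Y : FinGSet G} (f : X.carrier →[G] Y.carrier) (x : M.obj X),
    app Y (M.nm f x) = N.nm f (app X x)

/-- A formal "transfer of a norm of an element of `M`": a pair
`(U →i V →j X, u ∈ M(U))`. -/
structure PreT {G : Type} [Group G] (M : SemiMackey G) (X : FinGSet G) : Type 1 where
  U : FinGSet G
  V : FinGSet G
  i : U.carrier →[G] V.carrier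
  j : V.carrier →[G] X.carrier
  u : M.obj U

/-- Two pairs are isomorphic. -/
def IsoRel (M : SemiMackey G) (X : FinGSet G) (a b : PreT M X) : Prop :=
  ∃ (f : b.U.carrier ≃ a.U.carrier) (g : b.V.carrier ≃ a.V.carrier)
    (hf : IsEquivariant G ⇑f) (_ : IsEquivariant G ⇑g),
    (∀ u' : b.U.carrier, a.i (f u') = g (b.i u')) ∧
    (∀ v' : b.V.carrier, a.j (g v') = b.j v') ∧
    M.res (MulActionHom.mk ⇑f hf) a.u = b.u

/-- The relation defining the free semi-Tambara functor `sT(M)`: pairs are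
identified up to isomorphism and the distributive-law relation. -/
inductive STRel (M : SemiMackey G) (X : FinGSet G) : PreT M X → PreT M X → Prop
  | iso {a b : PreT M X} : IsoRel M X a b → STRel M X a b
  | distrib {W U V A B : FinGSet G} (k : W.carrier →[G] U.carrier)
      (i : U.carrier →[G] V.carrier) (j : V.carrier →[G] X.carrier)
      (f : A.carrier →[G] W.carrier) (g : A.carrier →[G] B.carrier)
      (h : B.carrier →[G] V.carrier) :
      IsDistributor k i f g h → ∀ w : M.obj W,
      STRel M X ⟨U, V, i, j, M.tr k w⟩ ⟨A, B, g, gcomp j h, M.res f w⟩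

/-- The value of the free semi-Tambara functor on `M` at `X`. -/
def sT (M : SemiMackey G) (X : FinGSet G) : Type 1 := Quot (STRel M X)

/-- The universal map `θ_M : M → sT(M)`, at the level of representatives. -/
def thetaPre (M : SemiMackey G) (X : FinGSet G) (x : M.obj X) : PreT M X :=
  ⟨X, X, gid G X.carrier, gid G X.carrier, x⟩

/-- Transfer on representatives: postcomposition. -/
def trPre (M : SemiMackey G) {X Y : FinGSet G} (f : X.carrier →[G] Y.carrier)
    (a : PreT M X) : PreT M Y :=
  ⟨a.U, a.V, a.i, gcomp f a.j, a.u⟩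

/-- Restriction on representatives: pull back both maps. -/
def resPre (M : SemiMackey G) {X Y : FinGSet G} (f : Y.carrier →[G] X.carrier)
    (a : PreT M X) : PreT M Y where
  U := mkG G (Pb a.i (Pb.fstHom a.j f))
  V := mkG G (Pb a.j f)
  i := Pb.sndHom a.i (Pb.fstHom a.j f)
  j := Pb.sndHom a.j f
  u := M.res (X := mkG G (Pb a.i (Pb.fstHom a.j f))) (Pb.fstHom a.i (Pb.fstHom a.j f)) a.u

/-- Norm on representatives, via the canonical exponential diagram for `(j, f)`. -/
def normPre (M : SemiMackey G) {X Y : FinGSet G} (f : X.carrier →[G] Y.carrier)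
    (a : PreT M X) : PreT M Y where
  U := mkG G (Pb a.i (evalHom a.j f))
  V := mkG G (Sec a.j f)
  i := gcomp (pi2Hom a.j f) (Pb.sndHom a.i (evalHom a.j f))
  j := pHom a.j f
  u := M.res (X := mkG G (Pb a.i (evalHom a.j f))) (Pb.fstHom a.i (evalHom a.j f)) a.u

/-- Addition on representatives: disjoint union. -/
noncomputable def addPre (M : SemiMackey G) {X : FinGSet G} (a b : PreT M X) : PreT M X where
  U := sumG a.U b.U
  V := sumG a.V b.V
  i := sumMapHom a.i b.i
  j := sumElimHom a.j b.j
  u := M.pairElt a.u b.u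

/-- A pair has (pure) degree `n` if every fiber of its first map has exactly `n`
elements. -/
def DegN {M : SemiMackey G} {X : FinGSet G} (n : ℕ) (a : PreT M X) : Prop :=
  ∀ v : a.V.carrier, Nat.card {u : a.U.carrier // a.i u = v} = n

/-- A finite `G`-set over `X` (a representative for the Burnside semi-Mackey functor). -/
structure BurnPre (G : Type) [Group G] (X : FinGSet G) : Type 1 where
  A : FinGSet G
  f : A.carrier →[G] X.carrier

/-- Isomorphism of finite `G`-sets over `X`. -/
def BurnIso {X : FinGSet G} (s t : BurnPre G X) : Prop :=
  ∃ (e : s.A.carrier ≃ t.A.carrier) (_ : IsEquivariant G ⇑e), ∀ x, t.f (e x) = s.f x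

/-- The pair `(∅ → A →f X, 0)` associated to a `G`-set over `X`. -/
noncomputable def bPair (M : SemiMackey G) {X : FinGSet G} (s : BurnPre G X) : PreT M X :=
  ⟨emptyG G, s.A, initHom s.A, s.f, (M.nonempty (emptyG G)).some⟩

end CoreB

section Aux
set_option linter.unusedVariables false
variable {G : Type} [Group G]

theorem hom_ext {X Y : Type} [MulAction G X] [MulAction G Y] {f g : X →[G] Y}
    (h : ∀ x, f x = g x) : f = g := MulActionHom.ext h

theorem isEquivariant_symm {X Y : Type} [MulAction G X] [MulAction G Y] (e : X ≃ Y)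
    (he : IsEquivariant G ⇑e) : IsEquivariant G ⇑e.symm := by
  intro a y
  apply e.injective
  rw [Equiv.apply_symm_apply, he, Equiv.apply_symm_apply]

/-- Auxiliary: bundle an equivariant equiv as a hom. -/
def eqHom {X Y : Type} [MulAction G X] [MulAction G Y] (e : X ≃ Y)
    (he : IsEquivariant G ⇑e) : X →[G] Y := ⟨⇑e, he⟩

@[simp] theorem eqHom_apply {X Y : Type} [MulAction G X] [MulAction G Y] (e : X ≃ Y)
    (he : IsEquivariant G ⇑e) (x : X) : eqHom e he x = e x := rfl

/-- Predicate-based subset `G`-set. -/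
def subFinG (V : FinGSet G) (p : V.carrier → Prop)
    (hp : ∀ (a : G) (v : V.carrier), p v → p (a • v)) : FinGSet G where
  carrier := Subtype p
  fin := Subtype.finite
  act := { smul := fun a v => ⟨a • v.1, hp a v.1 v.2⟩
           one_smul := fun v => Subtype.ext (one_smul _ _)
           mul_smul := fun a b v => Subtype.ext (mul_smul _ _ _) }

def subIncl (V : FinGSet G) (p : V.carrier → Prop)
    (hp : ∀ (a : G) (v : V.carrier), p v → p (a • v)) :
    (subFinG V p hp).carrier →[G] V.carrier := ⟨fun v => v.1, fun _ _ => rfl⟩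

@[simp] theorem subIncl_apply (V : FinGSet G) (p : V.carrier → Prop) (hp) (v) :
    subIncl V p hp v = v.1 := rfl

@[simp] theorem subFinG_smul (V : FinGSet G) (p : V.carrier → Prop) (hp)
    (a : G) (v : (subFinG V p hp).carrier) : (a • v).1 = a • v.1 := rfl

/-- Pb as predicate subtype of the product. -/
def pbSet (X Y : FinGSet G) (p : X.carrier × Y.carrier → Prop)
    (hp : ∀ (a : G) (q : X.carrier × Y.carrier), p q → p (a • q.1, a • q.2)) : FinGSet G where
  carrier := Subtype p
  fin := Subtype.finite
  act := { smul := fun a q => ⟨(a • q.1.1, a • q.1.2), hp a q.1 q.2⟩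
           one_smul := fun q => Subtype.ext (Prod.ext (one_smul _ _) (one_smul _ _))
           mul_smul := fun a b q => Subtype.ext (Prod.ext (mul_smul _ _ _) (mul_smul _ _ _)) }

def pbFst (X Y : FinGSet G) (p : X.carrier × Y.carrier → Prop) (hp) :
    (pbSet X Y p hp).carrier →[G] X.carrier := ⟨fun q => q.1.1, fun _ _ => rfl⟩

def pbSnd (X Y : FinGSet G) (p : X.carrier × Y.carrier → Prop) (hp) :
    (pbSet X Y p hp).carrier →[G] Y.carrier := ⟨fun q => q.1.2, fun _ _ => rfl⟩

theorem pbSet_transport (N : SemiMackey G) {X Y : FinGSet G}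
    (p q : X.carrier × Y.carrier → Prop) (hp) (hq) (hpq : p = q) (y : N.obj Y) :
    N.tr (pbFst X Y p hp) (N.res (pbSnd X Y p hp) y)
      = N.tr (pbFst X Y q hq) (N.res (pbSnd X Y q hq) y) := by
  subst hpq; rfl

theorem mackey_transport (N : SemiMackey G) {X Y Z Z' : FinGSet G}
    (f : X.carrier →[G] Z.carrier) (g : Y.carrier →[G] Z.carrier)
    (f' : X.carrier →[G] Z'.carrier) (g' : Y.carrier →[G] Z'.carrier)
    (hiff : ∀ x y, f x = g y ↔ f' x = g' y) (y : N.obj Y) :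
    N.tr (X := mkG G (Pb f g)) (Pb.fstHom f g)
        (N.res (X := mkG G (Pb f g)) (Pb.sndHom f g) y)
      = N.tr (X := mkG G (Pb f' g')) (Pb.fstHom f' g')
        (N.res (X := mkG G (Pb f' g')) (Pb.sndHom f' g') y) := by
  have hp : ∀ (a : G) (q : X.carrier × Y.carrier), (f q.1 = g q.2) → (f (a • q.1) = g (a • q.2)) := by
    intro a q h
    rw [MulActionHom.map_smul, MulActionHom.map_smul]
    exact congrArg (a • ·) h
  have hq : ∀ (a : G) (q : X.carrier × Y.carrier), (f' q.1 = g' q.2) → (f' (a • q.1) = g' (a • q.2)) := by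
    intro a q h
    rw [MulActionHom.map_smul, MulActionHom.map_smul]
    exact congrArg (a • ·) h
  show N.tr (pbFst X Y (fun q => f q.1 = g q.2) (fun a q h => hp a q h))
        (N.res (pbSnd X Y (fun q => f q.1 = g q.2) (fun a q h => hp a q h)) y)
      = N.tr (pbFst X Y (fun q => f' q.1 = g' q.2) (fun a q h => hq a q h))
        (N.res (pbSnd X Y (fun q => f' q.1 = g' q.2) (fun a q h => hq a q h)) y)
  exact pbSet_transport N _ _ _ _ (funext fun q => propext (hiff q.1 q.2)) y

/-- The key transport lemma: transfer along an equivariant bijection equals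
restriction along its inverse. -/
theorem tr_eq_res_symm (N : SemiMackey G) {P Q : FinGSet G} (e : P.carrier ≃ Q.carrier)
    (he : IsEquivariant G ⇑e) (y : N.obj P) :
    N.tr (eqHom e he) y = N.res (eqHom e.symm (isEquivariant_symm e he)) y := by
  have h1 := N.mackey (gid G Q.carrier) (eqHom e he) y
  rw [N.res_id] at h1
  have h2 := N.mackey (eqHom e.symm (isEquivariant_symm e he)) (gid G P.carrier) y
  rw [N.tr_id] at h2
  rw [h1, h2]
  exact mackey_transport N _ _ _ _ (fun q p => by
    show q = e p ↔ e.symm q = p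
    exact (e.symm_apply_eq).symm) y

theorem res_res_iso (N : SemiMackey G) {P Q : FinGSet G} (e : P.carrier ≃ Q.carrier)
    (he : IsEquivariant G ⇑e) (x : N.obj Q) :
    N.res (eqHom e.symm (isEquivariant_symm e he)) (N.res (eqHom e he) x) = x := by
  rw [N.res_comp]
  have : gcomp (eqHom e he) (eqHom e.symm (isEquivariant_symm e he)) = gid G Q.carrier :=
    hom_ext (fun q => e.apply_symm_apply q)
  rw [this, N.res_id]

theorem tr_res_iso (N : SemiMackey G) {P Q : FinGSet G} (e : P.carrier ≃ Q.carrier)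
    (he : IsEquivariant G ⇑e) (x : N.obj Q) :
    N.tr (eqHom e he) (N.res (eqHom e he) x) = x := by
  rw [tr_eq_res_symm]
  exact res_res_iso N e he x

theorem tr_precomp_iso (N : SemiMackey G) {P Q R : FinGSet G} (e : P.carrier ≃ Q.carrier)
    (he : IsEquivariant G ⇑e) (f : Q.carrier →[G] R.carrier) (x : N.obj Q) :
    N.tr (gcomp f (eqHom e he)) (N.res (eqHom e he) x) = N.tr f x := by
  rw [← N.tr_comp, tr_res_iso]

theorem tr_res_symm_iso (N : SemiMackey G) {P Q R : FinGSet G} (e : P.carrier ≃ Q.carrier)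
    (he : IsEquivariant G ⇑e) (f : Q.carrier →[G] R.carrier) (x : N.obj P) :
    N.tr f (N.res (eqHom e.symm (isEquivariant_symm e he)) x) = N.tr (gcomp f (eqHom e he)) x := by
  rw [← tr_eq_res_symm, N.tr_comp]


/-- Equiv between subtypes along an equiv. -/
def subEquiv {X Y : Type} (e : X ≃ Y) (p : X → Prop) (q : Y → Prop)
    (hpq : ∀ a, p a → q (e a)) (hqp : ∀ b, q b → p (e.symm b)) :
    {a // p a} ≃ {b // q b} where
  toFun := fun x => ⟨e x.1, hpq x.1 x.2⟩
  invFun := fun y => ⟨e.symm y.1, hqp y.1 y.2⟩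
  left_inv := fun x => Subtype.ext (e.symm_apply_apply x.1)
  right_inv := fun y => Subtype.ext (e.apply_symm_apply y.1)

@[simp] theorem subEquiv_apply {X Y : Type} (e : X ≃ Y) (p : X → Prop) (q : Y → Prop)
    (hpq) (hqp) (x : {a // p a}) : ((subEquiv e p q hpq hqp) x).1 = e x.1 := rfl

/-- A subtype on a trivially true predicate. -/
def subAllEquiv {X : Type} (p : X → Prop) (hp : ∀ a, p a) : {a // p a} ≃ X where
  toFun := fun x => x.1
  invFun := fun a => ⟨a, hp a⟩
  left_inv := fun x => Subtype.ext rfl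
  right_inv := fun a => rfl

/-- Constructor for `Pb` keeping the `Pb` head. -/
def pbMk {X Y Z : Type} [MulAction G X] [MulAction G Y] [MulAction G Z]
    (f : X →[G] Z) (g : Y →[G] Z) (x : X) (y : Y) (h : f x = g y) : Pb f g := ⟨(x, y), h⟩

@[simp] theorem pbMk_fst {X Y Z : Type} [MulAction G X] [MulAction G Y] [MulAction G Z]
    (f : X →[G] Z) (g : Y →[G] Z) (x : X) (y : Y) (h : f x = g y) :
    (pbMk f g x y h).1.1 = x := rfl
@[simp] theorem pbMk_snd {X Y Z : Type} [MulAction G X] [MulAction G Y] [MulAction G Z]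
    (f : X →[G] Z) (g : Y →[G] Z) (x : X) (y : Y) (h : f x = g y) :
    (pbMk f g x y h).1.2 = y := rfl

end Aux

section AddStruct
set_option linter.unusedVariables false
variable {G : Type} [Group G]

/-- Compute `res j (tr i y)` via an explicit model `P` of the pullback. -/
theorem res_tr_via (N : SemiMackey G) {X Y Z P : FinGSet G}
    (j : X.carrier →[G] Z.carrier) (i : Y.carrier →[G] Z.carrier)
    (m : P.carrier ≃ Pb j i) (hm : IsEquivariant G ⇑m) (y : N.obj Y) :
    N.res j (N.tr i y)
      = N.tr (gcomp (Pb.fstHom j i) (eqHom m hm))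
          (N.res (gcomp (Pb.sndHom j i) (eqHom m hm)) y) := by
  erw [N.mackey j i y,
    ← tr_precomp_iso N m hm (Pb.fstHom j i) (N.res (X := mkG G (Pb j i)) (Pb.sndHom j i) y),
    N.res_comp]
  rfl

theorem pair_fst (N : SemiMackey G) {X Y : FinGSet G} (x : N.obj X) (y : N.obj Y) :
    N.res (inlHom X Y) (N.pairElt x y) = x := by
  have h := (Equiv.ofBijective _ (N.sum_bij X Y)).apply_symm_apply (x, y)
  exact congrArg Prod.fst h

theorem pair_snd (N : SemiMackey G) {X Y : FinGSet G} (x : N.obj X) (y : N.obj Y) :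
    N.res (inrHom X Y) (N.pairElt x y) = y := by
  have h := (Equiv.ofBijective _ (N.sum_bij X Y)).apply_symm_apply (x, y)
  exact congrArg Prod.snd h

theorem elt_ext (N : SemiMackey G) {X Y : FinGSet G} {z z' : N.obj (sumG X Y)}
    (h1 : N.res (inlHom X Y) z = N.res (inlHom X Y) z')
    (h2 : N.res (inrHom X Y) z = N.res (inrHom X Y) z') : z = z' :=
  (N.sum_bij X Y).injective (Prod.ext h1 h2)

theorem res_sumMap_pair (N : SemiMackey G) {X Y X' Y' : FinGSet G}
    (f : X.carrier →[G] X'.carrier) (g : Y.carrier →[G] Y'.carrier)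
    (x : N.obj X') (y : N.obj Y') :
    N.res (sumMapHom f g) (N.pairElt x y) = N.pairElt (N.res f x) (N.res g y) := by
  refine elt_ext N ?_ ?_
  · rw [N.res_comp, pair_fst]
    have h : gcomp (sumMapHom f g) (inlHom X Y) = gcomp (inlHom X' Y') f :=
      hom_ext (fun v => rfl)
    rw [h, ← N.res_comp, pair_fst]
  · rw [N.res_comp, pair_snd]
    have h : gcomp (sumMapHom f g) (inrHom X Y) = gcomp (inrHom X' Y') g :=
      hom_ext (fun v => rfl)
    rw [h, ← N.res_comp, pair_snd]

theorem res_sumElim_pair (N : SemiMackey G) {A B Z : FinGSet G}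
    (f : A.carrier →[G] Z.carrier) (g : B.carrier →[G] Z.carrier) (z : N.obj Z) :
    N.res (sumElimHom f g) z = N.pairElt (N.res f z) (N.res g z) := by
  refine elt_ext N ?_ ?_
  · rw [N.res_comp, pair_fst]
    have h : gcomp (sumElimHom f g) (inlHom A B) = f := hom_ext (fun v => rfl)
    rw [h]
  · rw [N.res_comp, pair_snd]
    have h : gcomp (sumElimHom f g) (inrHom A B) = g := hom_ext (fun v => rfl)
    rw [h]

theorem tr_sumMap_pair (N : SemiMackey G) {X Y X' Y' : FinGSet G}
    (f : X.carrier →[G] X'.carrier) (g : Y.carrier →[G] Y'.carrier)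
    (x : N.obj X) (y : N.obj Y) :
    N.tr (sumMapHom f g) (N.pairElt x y) = N.pairElt (N.tr f x) (N.tr g y) := by
  refine elt_ext N ?_ ?_
  · rw [pair_fst]
    have hbij : Function.Bijective
        (fun v => pbMk (inlHom X' Y') (sumMapHom f g) (f v) (Sum.inl v) rfl) := by
      constructor
      · intro a b h
        exact Sum.inl_injective (congrArg (fun p => (Subtype.val p).2) h)
      · rintro ⟨⟨x', s⟩, hs⟩
        cases s with
        | inl v =>
          refine ⟨v, Subtype.ext (Prod.ext ?_ rfl)⟩
          exact (Sum.inl_injective (hs : Sum.inl x' = Sum.inl (f v))).symm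
        | inr v => exact (nomatch (hs : Sum.inl x' = Sum.inr (g v)))
    have hm : IsEquivariant G ⇑(Equiv.ofBijective _ hbij) := by
      intro a v
      exact Subtype.ext (Prod.ext (MulActionHom.map_smul f a v) rfl)
    rw [res_tr_via N (inlHom X' Y') (sumMapHom f g) (Equiv.ofBijective _ hbij) hm]
    have h1 : gcomp (Pb.fstHom (inlHom X' Y') (sumMapHom f g))
        (eqHom (Equiv.ofBijective _ hbij) hm) = f := hom_ext (fun v => rfl)
    have h2 : gcomp (Pb.sndHom (inlHom X' Y') (sumMapHom f g))
        (eqHom (Equiv.ofBijective _ hbij) hm) = inlHom X Y := hom_ext (fun v => rfl)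
    rw [h1, h2, pair_fst]
  · rw [pair_snd]
    have hbij : Function.Bijective
        (fun v => pbMk (inrHom X' Y') (sumMapHom f g) (g v) (Sum.inr v) rfl) := by
      constructor
      · intro a b h
        exact Sum.inr_injective (congrArg (fun p => (Subtype.val p).2) h)
      · rintro ⟨⟨y', s⟩, hs⟩
        cases s with
        | inr v =>
          refine ⟨v, Subtype.ext (Prod.ext ?_ rfl)⟩
          exact (Sum.inr_injective (hs : Sum.inr y' = Sum.inr (g v))).symm
        | inl v => exact (nomatch (hs : Sum.inr y' = Sum.inl (f v)))
    have hm : IsEquivariant G ⇑(Equiv.ofBijective _ hbij) := by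
      intro a v
      exact Subtype.ext (Prod.ext (MulActionHom.map_smul g a v) rfl)
    rw [res_tr_via N (inrHom X' Y') (sumMapHom f g) (Equiv.ofBijective _ hbij) hm]
    have h1 : gcomp (Pb.fstHom (inrHom X' Y') (sumMapHom f g))
        (eqHom (Equiv.ofBijective _ hbij) hm) = g := hom_ext (fun v => rfl)
    have h2 : gcomp (Pb.sndHom (inrHom X' Y') (sumMapHom f g))
        (eqHom (Equiv.ofBijective _ hbij) hm) = inrHom X Y := hom_ext (fun v => rfl)
    rw [h1, h2, pair_snd]

theorem tr_sumElim (N : SemiMackey G) {A B Z : FinGSet G}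
    (f : A.carrier →[G] Z.carrier) (g : B.carrier →[G] Z.carrier)
    (x : N.obj A) (y : N.obj B) :
    N.tr (sumElimHom f g) (N.pairElt x y) = N.add (N.tr f x) (N.tr g y) := by
  show _ = N.tr (foldHom Z) (N.pairElt (N.tr f x) (N.tr g y))
  rw [← tr_sumMap_pair, N.tr_comp]
  congr 1
  exact hom_ext (fun v => by cases v <;> rfl)

theorem add_comm' (N : SemiMackey G) {X : FinGSet G} (x y : N.obj X) :
    N.add x y = N.add y x := by
  show N.tr (foldHom X) (N.pairElt x y) = N.tr (foldHom X) (N.pairElt y x)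
  have hsw : IsEquivariant G ⇑(Equiv.sumComm X.carrier X.carrier) := by
    intro a v; cases v <;> rfl
  have hp : N.pairElt y x
      = N.res (eqHom (Equiv.sumComm X.carrier X.carrier).symm
          (isEquivariant_symm _ hsw)) (N.pairElt x y) := by
    refine elt_ext N ?_ ?_
    · rw [pair_fst, N.res_comp]
      have h : gcomp (eqHom (Equiv.sumComm X.carrier X.carrier).symm
          (isEquivariant_symm _ hsw)) (inlHom X X) = inrHom X X := hom_ext (fun v => rfl)
      erw [h, pair_snd]
    · rw [pair_snd, N.res_comp]
      have h : gcomp (eqHom (Equiv.sumComm X.carrier X.carrier).symm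
          (isEquivariant_symm _ hsw)) (inrHom X X) = inlHom X X := hom_ext (fun v => rfl)
      erw [h, pair_fst]
  erw [hp, tr_res_symm_iso N _ hsw]
  congr 1
  exact hom_ext (fun v => by cases v <;> rfl)

theorem add_zero' (N : SemiMackey G) {X : FinGSet G} (x : N.obj X) :
    N.add x (N.zero X) = x := by
  show N.tr (foldHom X)
      (N.pairElt x (N.tr (initHom X) (N.nonempty (emptyG G)).some)) = x
  have hx : N.pairElt x (N.tr (initHom X) (N.nonempty (emptyG G)).some)
      = N.tr (sumMapHom (gid G X.carrier) (initHom X))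
          (N.pairElt x (N.nonempty (emptyG G)).some) := by
    rw [tr_sumMap_pair, N.tr_id]
  rw [hx, N.tr_comp]
  have hs : IsEquivariant G ⇑(Equiv.sumEmpty X.carrier Empty) := by
    intro a v
    cases v with
    | inl u => rfl
    | inr u => exact u.elim
  have hp : N.pairElt x (N.nonempty (emptyG G)).some
      = N.res (eqHom (Equiv.sumEmpty X.carrier Empty) hs) x := by
    refine elt_ext (X := X) (Y := emptyG G) N ?_ ?_
    · rw [pair_fst, N.res_comp]
      have h : gcomp (eqHom (Equiv.sumEmpty X.carrier Empty) hs) (inlHom X (emptyG G))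
          = gid G X.carrier := hom_ext (fun v => rfl)
      erw [h, N.res_id]
    · exact @Subsingleton.elim _ N.empty_subsingleton _ _
  rw [hp]
  have hti := tr_precomp_iso (P := sumG X (emptyG G)) (Q := X) N
    (Equiv.sumEmpty X.carrier Empty) hs (gid G X.carrier) x
  have hh : gcomp (foldHom X) (sumMapHom (gid G X.carrier) (initHom X))
      = gcomp (gid G X.carrier) (eqHom (Equiv.sumEmpty X.carrier Empty) hs) := by
    refine hom_ext (fun v => ?_)
    cases v with
    | inl u => rfl
    | inr u => exact u.elim
  erw [hh, hti, N.tr_id]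

theorem add_assoc' (N : SemiMackey G) {X : FinGSet G} (x y z : N.obj X) :
    N.add (N.add x y) z = N.add x (N.add y z) := by
  show N.tr (foldHom X) (N.pairElt (N.add x y) z)
      = N.tr (foldHom X) (N.pairElt x (N.add y z))
  have hL : N.pairElt (N.add x y) z
      = N.tr (sumMapHom (foldHom X) (gid G X.carrier))
          (N.pairElt (N.pairElt x y) z) := by
    rw [tr_sumMap_pair, N.tr_id]; rfl
  have hR : N.pairElt x (N.add y z)
      = N.tr (sumMapHom (gid G X.carrier) (foldHom X))
          (N.pairElt x (N.pairElt y z)) := by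
    rw [tr_sumMap_pair, N.tr_id]; rfl
  rw [hL, hR, N.tr_comp, N.tr_comp]
  have hα : IsEquivariant G ⇑(Equiv.sumAssoc X.carrier X.carrier X.carrier) := by
    intro a v
    rcases v with (v | v) | v <;> rfl
  have hq : N.pairElt x (N.pairElt y z)
      = N.res (eqHom (Equiv.sumAssoc X.carrier X.carrier X.carrier).symm
          (isEquivariant_symm _ hα)) (N.pairElt (N.pairElt x y) z) := by
    refine elt_ext N ?_ ?_
    · rw [pair_fst, N.res_comp]
      have h : gcomp (eqHom (Equiv.sumAssoc X.carrier X.carrier X.carrier).symm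
            (isEquivariant_symm _ hα)) (inlHom X (sumG X X))
          = gcomp (inlHom (sumG X X) X) (inlHom X X) := hom_ext (fun v => rfl)
      erw [h, ← N.res_comp, pair_fst, pair_fst]
    · rw [pair_snd, N.res_comp]
      refine elt_ext N ?_ ?_
      · rw [pair_fst, N.res_comp]
        have h : gcomp (gcomp (eqHom (Equiv.sumAssoc X.carrier X.carrier X.carrier).symm
              (isEquivariant_symm _ hα)) (inrHom X (sumG X X))) (inlHom X X)
            = gcomp (inlHom (sumG X X) X) (inrHom X X) := hom_ext (fun v => rfl)
        erw [h, ← N.res_comp, pair_fst, pair_snd]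
      · rw [pair_snd, N.res_comp]
        have h : gcomp (gcomp (eqHom (Equiv.sumAssoc X.carrier X.carrier X.carrier).symm
              (isEquivariant_symm _ hα)) (inrHom X (sumG X X))) (inrHom X X)
            = inrHom (sumG X X) X := hom_ext (fun v => rfl)
        erw [h, pair_snd]
  erw [hq, tr_res_symm_iso N _ hα]
  congr 1
  refine hom_ext (fun v => ?_)
  rcases v with (v | v) | v <;> rfl

theorem add_cancel' (N : SemiMackey G)
    (hneg : ∀ (X : FinGSet G) (x : N.obj X), ∃ y, N.add x y = N.zero X)
    {X : FinGSet G} {a b k : N.obj X} (h : N.add a k = N.add b k) : a = b := by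
  obtain ⟨n, hn⟩ := hneg X k
  calc a = N.add a (N.zero X) := (add_zero' N a).symm
    _ = N.add a (N.add k n) := by rw [hn]
    _ = N.add (N.add a k) n := (add_assoc' N a k n).symm
    _ = N.add (N.add b k) n := by rw [h]
    _ = N.add b (N.add k n) := add_assoc' N b k n
    _ = N.add b (N.zero X) := by rw [hn]
    _ = b := add_zero' N b

end AddStruct

section STLemmas
set_option linter.unusedVariables false
variable {G : Type} [Group G]

theorem quot_mk_eq (M : SemiMackey G) (X : FinGSet G) {U V : FinGSet G}
    (i i' : U.carrier →[G] V.carrier) (j j' : V.carrier →[G] X.carrier) (u u' : M.obj U)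
    (hi : ∀ x, i x = i' x) (hj : ∀ v, j v = j' v) (hu : u = u') :
    Quot.mk (STRel M X) ⟨U, V, i, j, u⟩ = Quot.mk (STRel M X) ⟨U, V, i', j', u'⟩ := by
  refine Quot.sound (STRel.iso ?_)
  refine ⟨Equiv.refl _, Equiv.refl _, fun _ _ => rfl, fun _ _ => rfl, ?_, ?_, ?_⟩
  · intro x; exact hi x
  · intro v; exact hj v
  · show M.res (MulActionHom.mk _ _) u = u'
    have h : (MulActionHom.mk ⇑(Equiv.refl U.carrier) (fun _ _ => rfl) :
        U.carrier →[G] U.carrier) = gid G U.carrier := hom_ext (fun _ => rfl)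
    rw [h, M.res_id, hu]

/-- The "sections" of `(k, id)` are just `W`. -/
def secOfGid {W U : FinGSet G} (k : W.carrier →[G] U.carrier) (w : W.carrier) :
    Sec k (gid G U.carrier) where
  pt := k w
  sec := fun _ _ => w
  isSec := fun y h => h.symm

def secEval {W U : FinGSet G} (k : W.carrier →[G] U.carrier)
    (σ : Sec k (gid G U.carrier)) : W.carrier := σ.sec σ.pt rfl

def secEquiv {W U : FinGSet G} (k : W.carrier →[G] U.carrier) :
    W.carrier ≃ Sec k (gid G U.carrier) where
  toFun := secOfGid k
  invFun := secEval k
  left_inv := fun w => rfl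
  right_inv := fun σ => by
    refine Sec.ext' ?_ ?_
    · show k (σ.sec σ.pt rfl) = σ.pt
      exact σ.isSec σ.pt rfl
    · intro y h h'
      show σ.sec σ.pt rfl = σ.sec y h'
      exact Sec.sec_congr σ h'.symm

theorem secEquiv_equivariant {W U : FinGSet G} (k : W.carrier →[G] U.carrier) :
    IsEquivariant G ⇑(secEquiv k) := by
  intro a w
  refine Sec.ext' ?_ ?_
  · show k (a • w) = a • k w
    exact MulActionHom.map_smul k a w
  · intro y h h'
    show a • w = (a • secOfGid k w).sec y h'
    have h2 : y = a • k w := h'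
    have h3 : (gid G U.carrier) (a⁻¹ • y) = (secOfGid k w).pt := by
      show a⁻¹ • y = k w
      rw [h2, inv_smul_smul]
    rw [Sec.smul_sec a (secOfGid k w) y h' h3]
    rfl

def ecanEquiv {W U : FinGSet G} (k : W.carrier →[G] U.carrier) :
    W.carrier ≃ ECan k (gid G U.carrier) where
  toFun := fun w => pbMk (gid G U.carrier) (pHom k (gid G U.carrier)) (k w)
    (secEquiv k w) rfl
  invFun := fun q => secEval k q.1.2
  left_inv := fun w => rfl
  right_inv := fun q => by
    apply Subtype.ext
    refine Prod.ext ?_ ?_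
    · show k (secEval k q.1.2) = q.1.1
      have h1 : k (secEval k q.1.2) = q.1.2.pt := q.1.2.isSec q.1.2.pt rfl
      rw [h1]
      exact q.2.symm
    · show secEquiv k (secEval k q.1.2) = q.1.2
      exact (secEquiv k).right_inv q.1.2

theorem ecanEquiv_equivariant {W U : FinGSet G} (k : W.carrier →[G] U.carrier) :
    IsEquivariant G ⇑(ecanEquiv k) := by
  intro a w
  apply Subtype.ext
  refine Prod.ext ?_ ?_
  · show k (a • w) = a • k w
    exact MulActionHom.map_smul k a w
  · show secEquiv k (a • w) = a • secEquiv k w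
    exact secEquiv_equivariant k a w

theorem distribGid {W U : FinGSet G} (k : W.carrier →[G] U.carrier) :
    IsDistributor k (gid G U.carrier) (gid G W.carrier) (gid G W.carrier) k := by
  refine ⟨ecanEquiv k, secEquiv k, ecanEquiv_equivariant k, secEquiv_equivariant k,
    ?_, ?_, ?_⟩
  · intro w; rfl
  · intro w; rfl
  · intro w; rfl

/-- θ of a transfer, as a class in `sT`. -/
theorem theta_tr (M : SemiMackey G) (X : FinGSet G) {W : FinGSet G}
    (k : W.carrier →[G] X.carrier) (w : M.obj W) :
    Quot.mk (STRel M X) (thetaPre M X (M.tr k w))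
      = Quot.mk (STRel M X) ⟨W, W, gid G W.carrier, k, w⟩ := by
  have h := Quot.sound (STRel.distrib (M := M) (X := X) k (gid G X.carrier)
    (gid G X.carrier) (gid G W.carrier) (gid G W.carrier) k (distribGid k) w)
  refine h.trans ?_
  exact quot_mk_eq M X _ _ _ _ _ _ (fun x => rfl) (fun v => rfl) (M.res_id w)

theorem theta_add (M : SemiMackey G) (X : FinGSet G) (u v : M.obj X) :
    Quot.mk (STRel M X) (thetaPre M X (M.add u v))
      = Quot.mk (STRel M X) (addPre M (thetaPre M X u) (thetaPre M X v)) := by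
  have h := theta_tr M X (foldHom X) (M.pairElt u v)
  refine h.trans ?_
  exact quot_mk_eq M X _ _ _ _ _ _ (fun x => by cases x <;> rfl) (fun v => rfl) rfl

theorem degN_theta (M : SemiMackey G) (X : FinGSet G) (x : M.obj X) :
    DegN 1 (thetaPre M X x) := by
  intro v
  rw [Nat.card_eq_one_iff_unique]
  constructor
  · constructor
    rintro ⟨u, hu⟩ ⟨u', hu'⟩
    exact Subtype.ext ((hu : u = v).trans (hu' : u' = v).symm)
  · exact ⟨⟨v, rfl⟩⟩

theorem deg0_empty {M : SemiMackey G} {X : FinGSet G} (a : PreT M X) (h : DegN 0 a) :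
    IsEmpty a.U.carrier := by
  refine ⟨fun u => ?_⟩
  have h1 := h (a.i u)
  have h2 : 0 < Nat.card {u' : a.U.carrier // a.i u' = a.i u} := by
    haveI : Nonempty {u' : a.U.carrier // a.i u' = a.i u} := ⟨⟨u, rfl⟩⟩
    exact Nat.card_pos
  omega

theorem deg0_quot (M : SemiMackey G) (X : FinGSet G) (a : PreT M X) (h : DegN 0 a) :
    Quot.mk (STRel M X) a = Quot.mk (STRel M X) (bPair M ⟨a.V, a.j⟩) := by
  haveI := deg0_empty a h
  haveI : IsEmpty (bPair M (⟨a.V, a.j⟩ : BurnPre G X)).U.carrier :=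
    ⟨fun x => Empty.elim x⟩
  refine Quot.sound (STRel.iso ?_)
  refine ⟨Equiv.equivOfIsEmpty _ _, Equiv.refl _,
    fun g x => (IsEmpty.false x).elim, fun _ _ => rfl, ?_, ?_, ?_⟩
  · intro u'; exact (IsEmpty.false u').elim
  · intro v'; rfl
  · exact @Subsingleton.elim _ M.empty_subsingleton _ _

theorem deg1_quot (M : SemiMackey G) (X : FinGSet G) (a : PreT M X) (h : DegN 1 a) :
    ∃ x : M.obj X, Quot.mk (STRel M X) a = Quot.mk (STRel M X) (thetaPre M X x) := by
  have hbij : Function.Bijective ⇑a.i := by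
    constructor
    · intro u u' huu
      have h1 := h (a.i u')
      rw [Nat.card_eq_one_iff_unique] at h1
      haveI := h1.1
      have : (⟨u, huu⟩ : {w : a.U.carrier // a.i w = a.i u'})
          = ⟨u', rfl⟩ := Subsingleton.elim _ _
      exact congrArg Subtype.val this
    · intro v
      have h1 := h v
      rw [Nat.card_eq_one_iff_unique] at h1
      obtain ⟨⟨u, hu⟩⟩ := h1.2
      exact ⟨u, hu⟩
  have he : IsEquivariant G ⇑(Equiv.ofBijective ⇑a.i hbij) :=
    fun g u => MulActionHom.map_smul a.i g u
  refine ⟨M.tr a.j (M.res (eqHom (Equiv.ofBijective ⇑a.i hbij).symm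
    (isEquivariant_symm _ he)) a.u), ?_⟩
  have step1 : Quot.mk (STRel M X) a
      = Quot.mk (STRel M X) ⟨a.V, a.V, gid G a.V.carrier, a.j,
          M.res (eqHom (Equiv.ofBijective ⇑a.i hbij).symm
            (isEquivariant_symm _ he)) a.u⟩ := by
    refine Quot.sound (STRel.iso ?_)
    refine ⟨(Equiv.ofBijective ⇑a.i hbij).symm, Equiv.refl _,
      isEquivariant_symm _ he, fun _ _ => rfl, ?_, ?_, ?_⟩
    · intro v; exact (Equiv.ofBijective ⇑a.i hbij).apply_symm_apply v
    · intro v; rfl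
    · rfl
  rw [step1, theta_tr]

end STLemmas

section Burn
set_option linter.unusedVariables false
variable {G : Type} [Group G]

theorem burnIso_refl {X : FinGSet G} (s : BurnPre G X) : BurnIso s s :=
  ⟨Equiv.refl _, fun _ _ => rfl, fun _ => rfl⟩

theorem burnIso_symm {X : FinGSet G} {s t : BurnPre G X} (h : BurnIso s t) : BurnIso t s := by
  obtain ⟨e, he, hov⟩ := h
  refine ⟨e.symm, isEquivariant_symm e he, fun y => ?_⟩
  rw [← hov (e.symm y), e.apply_symm_apply]

theorem burnIso_trans {X : FinGSet G} {s t r : BurnPre G X}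
    (h1 : BurnIso s t) (h2 : BurnIso t r) : BurnIso s r := by
  obtain ⟨e1, he1, hov1⟩ := h1
  obtain ⟨e2, he2, hov2⟩ := h2
  refine ⟨e1.trans e2, fun g x => ?_, fun x => ?_⟩
  · show e2 (e1 (g • x)) = g • e2 (e1 x)
    rw [he1, he2]
  · show r.f (e2 (e1 x)) = s.f x
    rw [hov2, hov1]

/-- Binary sum of `G`-sets over `X`. -/
def bSum {X : FinGSet G} (s t : BurnPre G X) : BurnPre G X :=
  ⟨sumG s.A t.A, sumElimHom s.f t.f⟩

theorem burnIso_bSum {X : FinGSet G} {s s' t t' : BurnPre G X}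
    (h1 : BurnIso s s') (h2 : BurnIso t t') : BurnIso (bSum s t) (bSum s' t') := by
  obtain ⟨e1, he1, hov1⟩ := h1
  obtain ⟨e2, he2, hov2⟩ := h2
  refine ⟨Equiv.sumCongr e1 e2, fun g x => ?_, fun x => ?_⟩
  · cases x with
    | inl v => show Sum.inl (e1 (g • v)) = g • Sum.inl (e1 v); rw [he1]; rfl
    | inr v => show Sum.inr (e2 (g • v)) = g • Sum.inr (e2 v); rw [he2]; rfl
  · cases x with
    | inl v => exact hov1 v
    | inr v => exact hov2 v

theorem burnIso_assoc {X : FinGSet G} (s t r : BurnPre G X) :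
    BurnIso (bSum (bSum s t) r) (bSum s (bSum t r)) := by
  refine ⟨Equiv.sumAssoc _ _ _, fun g x => ?_, fun x => ?_⟩
  · rcases x with (v | v) | v <;> rfl
  · rcases x with (v | v) | v <;> rfl

/-- The degree-zero part of a pair: the set of points of `V` with empty fiber. -/
def phiPred {M : SemiMackey G} {X : FinGSet G} (a : PreT M X) : a.V.carrier → Prop :=
  fun v => ∀ u, a.i u ≠ v

theorem phiPred_smul {M : SemiMackey G} {X : FinGSet G} (a : PreT M X) :
    ∀ (g : G) (v : a.V.carrier), phiPred a v → phiPred a (g • v) := by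
  intro g v hv u hu
  refine hv (g⁻¹ • u) ?_
  rw [MulActionHom.map_smul, hu, inv_smul_smul]

noncomputable def Phi0 {M : SemiMackey G} {X : FinGSet G} (a : PreT M X) : BurnPre G X :=
  ⟨subFinG a.V (phiPred a) (phiPred_smul a),
    gcomp a.j (subIncl a.V (phiPred a) (phiPred_smul a))⟩

theorem phi_iso {M : SemiMackey G} {X : FinGSet G} {a b : PreT M X} (h : IsoRel M X a b) :
    BurnIso (Phi0 a) (Phi0 b) := by
  obtain ⟨f, g, hf, hg, h1, h2, h3⟩ := h
  have hmem : ∀ v : a.V.carrier, phiPred a v → phiPred b (g.symm v) := by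
    intro v hv u hu
    refine hv (f u) ?_
    rw [h1 u, hu, g.apply_symm_apply]
  have hmem' : ∀ v : b.V.carrier, phiPred b v → phiPred a (g v) := by
    intro v hv u hu
    refine hv (f.symm u) ?_
    have := h1 (f.symm u)
    rw [f.apply_symm_apply] at this
    rw [this] at hu
    exact g.injective hu
  refine ⟨⟨fun p => ⟨g.symm p.1, hmem p.1 p.2⟩, fun p => ⟨g p.1, hmem' p.1 p.2⟩,
      fun p => Subtype.ext (g.apply_symm_apply p.1),
      fun p => Subtype.ext (g.symm_apply_apply p.1)⟩, fun a0 p => ?_, fun p => ?_⟩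
  · exact Subtype.ext (isEquivariant_symm g hg a0 p.1)
  · show b.j (g.symm p.1) = a.j p.1
    have := h2 (g.symm p.1)
    rw [g.apply_symm_apply] at this
    exact this.symm

/-- The empty section over a point with empty fiber. -/
def emptySec {W U V : FinGSet G} (k : W.carrier →[G] U.carrier)
    (i : U.carrier →[G] V.carrier) (v : V.carrier) (hv : ∀ u, i u ≠ v) : Sec k i :=
  ⟨v, fun y hy => absurd hy (hv y), fun y hy => absurd hy (hv y)⟩

@[simp] theorem emptySec_pt {W U V : FinGSet G} (k : W.carrier →[G] U.carrier)
    (i : U.carrier →[G] V.carrier) (v : V.carrier) (hv : ∀ u, i u ≠ v) :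
    (emptySec k i v hv).pt = v := rfl

theorem phi_distrib {M : SemiMackey G} {X : FinGSet G}
    {W U V A B : FinGSet G} (k : W.carrier →[G] U.carrier)
    (i : U.carrier →[G] V.carrier) (j : V.carrier →[G] X.carrier)
    (f : A.carrier →[G] W.carrier) (g : A.carrier →[G] B.carrier)
    (h : B.carrier →[G] V.carrier) (hd : IsDistributor k i f g h) (w : M.obj W) :
    BurnIso (Phi0 (⟨U, V, i, j, M.tr k w⟩ : PreT M X))
      (Phi0 (⟨A, B, g, gcomp j h, M.res f w⟩ : PreT M X)) := by
  obtain ⟨α, β, hα, hβ, hfα, hgβ, hhβ⟩ := hd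
  have hto : ∀ (v : V.carrier) (hv : ∀ u, i u ≠ v) (x : A.carrier),
      g x ≠ β.symm (emptySec k i v hv) := by
    intro v hv x hx
    have h4 : β (g x) = emptySec k i v hv := by rw [hx, β.apply_symm_apply]
    have h5 : (α x).1.2 = emptySec k i v hv := by rw [← hgβ x, h4]
    refine hv (α x).1.1 ?_
    have h6 := (α x).2
    rw [h5] at h6
    exact h6
  have hfrom : ∀ (σ : B.carrier), (∀ x, g x ≠ σ) → ∀ u, i u ≠ (β σ).pt := by
    intro σ hσ u hu
    refine hσ (α.symm (pbMk i (pHom k i) u (β σ) hu)) ?_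
    have h4 : β (g (α.symm (pbMk i (pHom k i) u (β σ) hu)))
        = (α (α.symm (pbMk i (pHom k i) u (β σ) hu))).1.2 := hgβ _
    rw [α.apply_symm_apply] at h4
    exact β.injective h4
  have hsecβ : ∀ (σ : B.carrier) (hσ : ∀ x, g x ≠ σ),
      emptySec k i (β σ).pt (hfrom σ hσ) = β σ := by
    intro σ hσ
    refine Sec.ext' rfl ?_
    intro y hy hy'
    exact absurd hy' (hfrom σ hσ y)
  refine ⟨⟨fun p => ⟨β.symm (emptySec k i p.1 p.2), hto p.1 p.2⟩,
      fun p => ⟨(β p.1).pt, hfrom p.1 p.2⟩, ?_, ?_⟩, ?_, ?_⟩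
  · intro p
    refine Subtype.ext ?_
    show (β (β.symm (emptySec k i p.1 p.2))).pt = p.1
    rw [β.apply_symm_apply]
    rfl
  · intro p
    refine Subtype.ext ?_
    show β.symm (emptySec k i (β p.1).pt (hfrom p.1 p.2)) = p.1
    rw [hsecβ p.1 p.2, β.symm_apply_apply]
  · -- equivariance
    intro a0 p
    refine Subtype.ext ?_
    show β.symm (emptySec k i (a0 • p.1) ((a0 • p).2))
        = a0 • β.symm (emptySec k i p.1 p.2)
    have hsm : emptySec k i (a0 • p.1) ((a0 • p).2) = a0 • emptySec k i p.1 p.2 := by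
      refine Sec.ext' rfl ?_
      intro y hy hy'
      exact absurd hy ((a0 • p).2 y)
    rw [hsm]
    exact isEquivariant_symm β hβ a0 (emptySec k i p.1 p.2)
  · intro p
    show j (h (β.symm (emptySec k i p.1 p.2))) = j p.1
    have h4 : h (β.symm (emptySec k i p.1 p.2))
        = (β (β.symm (emptySec k i p.1 p.2))).pt := (hhβ _).symm
    rw [h4, β.apply_symm_apply]
    rfl

end Burn

section Burn2
set_option linter.unusedVariables false
variable {G : Type} [Group G]

theorem phi_add (M : SemiMackey G) {X : FinGSet G} (a b : PreT M X) :
    BurnIso (Phi0 (addPre M a b)) (bSum (Phi0 a) (Phi0 b)) := by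
  have hpa : ∀ (va : a.V.carrier), phiPred (addPre M a b) (Sum.inl va) → phiPred a va := by
    intro va hv u hu
    exact hv (Sum.inl u) (by show Sum.inl (a.i u) = Sum.inl va; rw [hu])
  have hpb : ∀ (vb : b.V.carrier), phiPred (addPre M a b) (Sum.inr vb) → phiPred b vb := by
    intro vb hv u hu
    exact hv (Sum.inr u) (by show Sum.inr (b.i u) = Sum.inr vb; rw [hu])
  have hpa' : ∀ (va : a.V.carrier), phiPred a va → phiPred (addPre M a b) (Sum.inl va) := by
    intro va hv u hu
    cases u with
    | inl u0 => exact hv u0 (Sum.inl_injective hu)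
    | inr u0 => exact nomatch hu
  have hpb' : ∀ (vb : b.V.carrier), phiPred b vb → phiPred (addPre M a b) (Sum.inr vb) := by
    intro vb hv u hu
    cases u with
    | inr u0 => exact hv u0 (Sum.inr_injective hu)
    | inl u0 => exact nomatch hu
  refine ⟨⟨fun p => match hp : p.1 with
      | Sum.inl va => Sum.inl ⟨va, hpa va (hp ▸ p.2)⟩
      | Sum.inr vb => Sum.inr ⟨vb, hpb vb (hp ▸ p.2)⟩,
    fun s => match s with
      | Sum.inl q => ⟨Sum.inl q.1, hpa' q.1 q.2⟩
      | Sum.inr q => ⟨Sum.inr q.1, hpb' q.1 q.2⟩, ?_, ?_⟩, ?_, ?_⟩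
  · rintro ⟨(va | vb), hp⟩
    · rfl
    · rfl
  · rintro (⟨va, hva⟩ | ⟨vb, hvb⟩)
    · rfl
    · rfl
  · rintro a0 ⟨(va | vb), hp⟩
    · rfl
    · rfl
  · rintro ⟨(va | vb), hp⟩
    · rfl
    · rfl

theorem phi_bPair (M : SemiMackey G) {X : FinGSet G} (s : BurnPre G X) :
    BurnIso (Phi0 (bPair M s)) s := by
  refine ⟨⟨fun p => p.1, fun v => ⟨v, fun u => Empty.elim u⟩,
    fun p => Subtype.ext rfl, fun v => rfl⟩, fun a0 p => rfl, fun p => rfl⟩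

/-- One step of the trajectory map for the cancellation argument. -/
def trajStep {A B K : Type} (e : A ⊕ K ≃ B ⊕ K) : B ⊕ K → B ⊕ K :=
  fun s => Sum.elim Sum.inl (fun kk => e (Sum.inr kk)) s

/-- The Burnside cancellation theorem. -/
theorem burn_cancel {X : FinGSet G} (A B K : BurnPre G X)
    (h : BurnIso (bSum A K) (bSum B K)) : BurnIso A B := by
  classical
  obtain ⟨e0, he0, hov0⟩ := h
  obtain ⟨e, he, hov⟩ :
      ∃ e : A.A.carrier ⊕ K.A.carrier ≃ B.A.carrier ⊕ K.A.carrier,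
        IsEquivariant G ⇑e ∧ ∀ x : A.A.carrier ⊕ K.A.carrier,
          Sum.elim (fun b => B.f b) (fun kk => K.f kk) (e x)
            = Sum.elim (fun aa => A.f aa) (fun kk => K.f kk) x :=
    ⟨e0, he0, hov0⟩
  have hstepInl : ∀ (m : ℕ) (b : B.A.carrier), (trajStep e)^[m] (Sum.inl b) = Sum.inl b := by
    intro m b
    induction m with
    | zero => rfl
    | succ m ih => rw [Function.iterate_succ_apply]; exact ih
  have hstep_smul : ∀ (g : G) (s : B.A.carrier ⊕ K.A.carrier),
      trajStep e (g • s) = g • trajStep e s := by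
    intro g s
    cases s with
    | inl b => rfl
    | inr kk =>
      show e (Sum.inr (g • kk)) = g • e (Sum.inr kk)
      have : (Sum.inr (g • kk) : A.A.carrier ⊕ K.A.carrier) = g • Sum.inr kk := rfl
      rw [this, he]
  have hiter_smul : ∀ (m : ℕ) (g : G) (s : B.A.carrier ⊕ K.A.carrier),
      (trajStep e)^[m] (g • s) = g • (trajStep e)^[m] s := by
    intro m g
    induction m with
    | zero => intro s; rfl
    | succ m ih =>
      intro s
      rw [Function.iterate_succ_apply, Function.iterate_succ_apply, hstep_smul, ih]
  have hpi : ∀ s, Sum.elim (fun b => B.f b) (fun kk => K.f kk) (trajStep e s)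
      = Sum.elim (fun b => B.f b) (fun kk => K.f kk) s := by
    intro s
    cases s with
    | inl b => rfl
    | inr kk => exact hov (Sum.inr kk)
  have hpiIter : ∀ (m : ℕ) (s), Sum.elim (fun b => B.f b) (fun kk => K.f kk) ((trajStep e)^[m] s)
      = Sum.elim (fun b => B.f b) (fun kk => K.f kk) s := by
    intro m
    induction m with
    | zero => intro s; rfl
    | succ m ih => intro s; rw [Function.iterate_succ_apply, ih, hpi]
  -- every trajectory reaches `B`
  have hreach : ∀ a : A.A.carrier, ∃ t bb, (trajStep e)^[t] (e (Sum.inl a)) = Sum.inl bb := by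
    intro a
    by_contra hno
    push_neg at hno
    have hkk : ∀ t : ℕ, ∃ kk, (trajStep e)^[t] (e (Sum.inl a)) = Sum.inr kk := by
      intro t
      cases hs : (trajStep e)^[t] (e (Sum.inl a)) with
      | inl b => exact absurd hs (hno t b)
      | inr kk => exact ⟨kk, rfl⟩
    choose κ hκ using hkk
    have hdes : ∀ i, ∀ j, i < j → κ i = κ j → False := by
      intro i
      induction i using Nat.strong_induction_on with
      | _ i ih =>
        intro j hij hkij
        have hsij : (trajStep e)^[i] (e (Sum.inl a)) = (trajStep e)^[j] (e (Sum.inl a)) := by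
          rw [hκ i, hκ j, hkij]
        match i, j, hij with
        | 0, j + 1, _ =>
          have h1 : (trajStep e)^[j+1] (e (Sum.inl a)) = e (Sum.inr (κ j)) := by
            rw [Function.iterate_succ_apply', hκ j]; rfl
          have h2 : e (Sum.inl a) = e (Sum.inr (κ j)) := by
            rw [← h1, ← hsij]; rfl
          exact nomatch (e.injective h2)
        | i + 1, j + 1, hij =>
          have h1 : (trajStep e)^[i+1] (e (Sum.inl a)) = e (Sum.inr (κ i)) := by
            rw [Function.iterate_succ_apply', hκ i]; rfl
          have h2 : (trajStep e)^[j+1] (e (Sum.inl a)) = e (Sum.inr (κ j)) := by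
            rw [Function.iterate_succ_apply', hκ j]; rfl
          have h3 : κ i = κ j := by
            have := e.injective ((h1.symm.trans hsij).trans h2)
            exact Sum.inr_injective this
          have h4 : κ i = κ (j) := h3
          have : i < j := by omega
          exact ih i (by omega) j this (by
            have : (trajStep e)^[i] (e (Sum.inl a)) = (trajStep e)^[j] (e (Sum.inl a)) := by
              rw [hκ i, hκ j, h3]
            rw [hκ i, hκ j] at this
            exact Sum.inr_injective this)
    have hinj : Function.Injective κ := by
      intro t1 t2 h12
      by_contra hne
      rcases Nat.lt_or_ge t1 t2 with hlt | hge
      · exact hdes t1 t2 hlt h12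
      · have : t2 < t1 := by omega
        exact hdes t2 t1 this h12.symm
    obtain ⟨x, y, hxy, hfe⟩ := Finite.exists_ne_map_eq_of_infinite κ
    exact hxy (hinj hfe)
  have hPuniq : ∀ (a : A.A.carrier) (b b' : B.A.carrier),
      (∃ t, (trajStep e)^[t] (e (Sum.inl a)) = Sum.inl b) →
      (∃ t, (trajStep e)^[t] (e (Sum.inl a)) = Sum.inl b') → b = b' := by
    intro a b b' ⟨t, ht⟩ ⟨t', ht'⟩
    rcases Nat.le_total t t' with hle | hle
    · have : (trajStep e)^[t'] (e (Sum.inl a)) = Sum.inl b := by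
        have hsplit : t' = (t' - t) + t := by omega
        rw [hsplit, Function.iterate_add_apply, ht, hstepInl]
      exact Sum.inl_injective (this.symm.trans ht')
    · have : (trajStep e)^[t] (e (Sum.inl a)) = Sum.inl b' := by
        have hsplit : t = (t - t') + t' := by omega
        rw [hsplit, Function.iterate_add_apply, ht', hstepInl]
      exact Sum.inl_injective (ht.symm.trans this)
  have hPex : ∀ a : A.A.carrier, ∃ bb, ∃ t, (trajStep e)^[t] (e (Sum.inl a)) = Sum.inl bb := by
    intro a
    obtain ⟨t, bb, hbb⟩ := hreach a
    exact ⟨bb, t, hbb⟩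
  set F : A.A.carrier → B.A.carrier := fun a => (hPex a).choose with hF_def
  have hF : ∀ a, ∃ t, (trajStep e)^[t] (e (Sum.inl a)) = Sum.inl (F a) := fun a => (hPex a).choose_spec
  -- equivariance
  have hFsmul : ∀ (g : G) (a : A.A.carrier), F (g • a) = g • F a := by
    intro g a
    obtain ⟨t, ht⟩ := hF a
    refine hPuniq (g • a) _ _ (hF (g • a)) ⟨t, ?_⟩
    have h1 : e (Sum.inl (g • a)) = g • e (Sum.inl a) := by
      have : (Sum.inl (g • a) : A.A.carrier ⊕ K.A.carrier) = g • Sum.inl a := rfl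
      rw [this, he]
    rw [h1, hiter_smul, ht]
    rfl
  -- over X
  have hFov : ∀ a, B.f (F a) = A.f a := by
    intro a
    obtain ⟨t, ht⟩ := hF a
    have h1 := hpiIter t (e (Sum.inl a))
    rw [ht] at h1
    have h2 := hov (Sum.inl a)
    show Sum.elim (fun b => B.f b) (fun kk => K.f kk) (Sum.inl (F a))
        = Sum.elim (fun aa => A.f aa) (fun kk => K.f kk) (Sum.inl a)
    exact h1.trans h2
  -- injectivity, via the double induction
  have key : ∀ N t t' (a a' : A.A.carrier) (kk : K.A.carrier), t + t' ≤ N →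
      (trajStep e)^[t] (e (Sum.inl a)) = Sum.inr kk →
      (trajStep e)^[t'] (e (Sum.inl a')) = Sum.inr kk →
      (∀ u, u ≤ t → ∃ k2, (trajStep e)^[u] (e (Sum.inl a)) = Sum.inr k2) →
      (∀ u, u ≤ t' → ∃ k2, (trajStep e)^[u] (e (Sum.inl a')) = Sum.inr k2) →
      a = a' := by
    intro N
    induction N with
    | zero =>
      intro t t' a a' kk hle h1 h2 _ _
      have ht : t = 0 := by omega
      have ht' : t' = 0 := by omega
      subst ht; subst ht'
      have := e.injective ((h1 : e (Sum.inl a) = Sum.inr kk).trans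
        (h2 : e (Sum.inl a') = Sum.inr kk).symm)
      exact Sum.inl_injective this
    | succ N ih =>
      intro t t' a a' kk hle h1 h2 hall1 hall2
      cases t with
      | zero =>
        cases t' with
        | zero =>
          have := e.injective ((h1 : e (Sum.inl a) = Sum.inr kk).trans
            (h2 : e (Sum.inl a') = Sum.inr kk).symm)
          exact Sum.inl_injective this
        | succ t' =>
          obtain ⟨k2, hk2⟩ := hall2 t' (by omega)
          have h3 : (trajStep e)^[t'+1] (e (Sum.inl a')) = e (Sum.inr k2) := by
            rw [Function.iterate_succ_apply', hk2]; rfl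
          have h4 : e (Sum.inl a) = e (Sum.inr k2) := by
            rw [← h3, h2, ← h1]; rfl
          exact absurd (e.injective h4) (fun hc => nomatch hc)
      | succ t =>
        cases t' with
        | zero =>
          obtain ⟨k2, hk2⟩ := hall1 t (by omega)
          have h3 : (trajStep e)^[t+1] (e (Sum.inl a)) = e (Sum.inr k2) := by
            rw [Function.iterate_succ_apply', hk2]; rfl
          have h4 : e (Sum.inl a') = e (Sum.inr k2) := by
            rw [← h3, h1, ← h2]; rfl
          exact absurd (e.injective h4) (fun hc => nomatch hc)
        | succ t' =>
          obtain ⟨k1, hk1⟩ := hall1 t (by omega)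
          obtain ⟨k1', hk1'⟩ := hall2 t' (by omega)
          have h3 : e (Sum.inr k1) = Sum.inr kk := by
            rw [← h1, Function.iterate_succ_apply', hk1]; rfl
          have h4 : e (Sum.inr k1') = Sum.inr kk := by
            rw [← h2, Function.iterate_succ_apply', hk1']; rfl
          have h5 : k1 = k1' := Sum.inr_injective (e.injective (h3.trans h4.symm))
          subst h5
          exact ih t t' a a' k1 (by omega) hk1 hk1'
            (fun u hu => hall1 u (by omega)) (fun u hu => hall2 u (by omega))
  have hminex : ∀ aa : A.A.carrier, ∃ t : ℕ,
      (∃ bb, (trajStep e)^[t] (e (Sum.inl aa)) = Sum.inl bb) ∧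
      ∀ u, u < t → ∃ k2, (trajStep e)^[u] (e (Sum.inl aa)) = Sum.inr k2 := by
    intro aa
    have hex : ∃ t, ∃ bb, (trajStep e)^[t] (e (Sum.inl aa)) = Sum.inl bb := hreach aa
    refine ⟨Nat.find hex, Nat.find_spec hex, ?_⟩
    intro u hu
    cases hs : (trajStep e)^[u] (e (Sum.inl aa)) with
    | inl bb => exact absurd ⟨bb, hs⟩ (Nat.find_min hex hu)
    | inr kk => exact ⟨kk, rfl⟩
  have hFinj : Function.Injective F := by
    intro a a' hFF
    obtain ⟨t1, ⟨b1, hb1⟩, hmin1⟩ := hminex a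
    obtain ⟨t2, ⟨b2, hb2⟩, hmin2⟩ := hminex a'
    have hb1F : b1 = F a := hPuniq a _ _ ⟨t1, hb1⟩ (hF a)
    have hb2F : b2 = F a' := hPuniq a' _ _ ⟨t2, hb2⟩ (hF a')
    have hbb : b1 = b2 := by rw [hb1F, hb2F, hFF]
    cases t1 with
    | zero =>
      cases t2 with
      | zero =>
        have h1 : e (Sum.inl a) = Sum.inl b1 := hb1
        have h2 : e (Sum.inl a') = Sum.inl b2 := hb2
        have := e.injective (h1.trans (by rw [hbb, ← h2]))
        exact Sum.inl_injective this
      | succ tt =>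
        have h1 : e (Sum.inl a) = Sum.inl b1 := hb1
        obtain ⟨k2, hk2⟩ := hmin2 tt (by omega)
        have h3 : e (Sum.inr k2) = Sum.inl b2 := by
          rw [← hb2, Function.iterate_succ_apply', hk2]; rfl
        have h4 : e (Sum.inl a) = e (Sum.inr k2) := by rw [h1, hbb, ← h3]
        exact absurd (e.injective h4) (fun hc => nomatch hc)
    | succ tt =>
      cases t2 with
      | zero =>
        have h2 : e (Sum.inl a') = Sum.inl b2 := hb2
        obtain ⟨k2, hk2⟩ := hmin1 tt (by omega)
        have h3 : e (Sum.inr k2) = Sum.inl b1 := by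
          rw [← hb1, Function.iterate_succ_apply', hk2]; rfl
        have h4 : e (Sum.inl a') = e (Sum.inr k2) := by rw [h2, ← hbb, ← h3]
        exact absurd (e.injective h4) (fun hc => nomatch hc)
      | succ tt' =>
        obtain ⟨k1, hk1⟩ := hmin1 tt (by omega)
        obtain ⟨k1', hk1'⟩ := hmin2 tt' (by omega)
        have h3 : e (Sum.inr k1) = Sum.inl b1 := by
          rw [← hb1, Function.iterate_succ_apply', hk1]; rfl
        have h4 : e (Sum.inr k1') = Sum.inl b2 := by
          rw [← hb2, Function.iterate_succ_apply', hk1']; rfl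
        have h5 : k1 = k1' := by
          refine Sum.inr_injective (e.injective ?_)
          rw [h3, h4, hbb]
        subst h5
        exact key (tt + tt') tt tt' a a' k1 (by omega) hk1 hk1'
          (fun u hu => hmin1 u (by omega)) (fun u hu => hmin2 u (by omega))
  -- cardinality
  have hcard : Nat.card A.A.carrier = Nat.card B.A.carrier := by
    have h1 := Nat.card_congr e
    rw [Nat.card_sum, Nat.card_sum] at h1
    omega
  have hFbij : Function.Bijective F :=
    (Nat.bijective_iff_injective_and_card F).2 ⟨hFinj, hcard⟩
  exact ⟨Equiv.ofBijective F hFbij, fun g a => (hFsmul g a).symm ▸ rfl, hFov⟩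

end Burn2

section Psi
set_option linter.unusedVariables false
variable {G : Type} [Group G]

/-- Transport a transfer-of-restriction along an equivariant bijection of the middle object. -/
theorem tr_res_transport (N : SemiMackey G) {P Q W R : FinGSet G}
    (e : P.carrier ≃ Q.carrier) (he : IsEquivariant G ⇑e)
    (fP : P.carrier →[G] R.carrier) (gP : P.carrier →[G] W.carrier)
    (fQ : Q.carrier →[G] R.carrier) (gQ : Q.carrier →[G] W.carrier)
    (hf : ∀ p, fQ (e p) = fP p) (hg : ∀ p, gQ (e p) = gP p) (w : N.obj W) :
    N.tr fP (N.res gP w) = N.tr fQ (N.res gQ w) := by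
  have h1 : gP = gcomp gQ (eqHom e he) := hom_ext (fun p => (hg p).symm)
  have h2 : fP = gcomp fQ (eqHom e he) := hom_ext (fun p => (hf p).symm)
  rw [h1, h2, ← N.res_comp, tr_precomp_iso]

/-- Degree-one part predicate: points of `U` whose `i`-fiber is a singleton. -/
def psiPred {M : SemiMackey G} {X : FinGSet G} (a : PreT M X) : a.U.carrier → Prop :=
  fun u => ∀ u', a.i u' = a.i u → u' = u

theorem psiPred_smul {M : SemiMackey G} {X : FinGSet G} (a : PreT M X) :
    ∀ (g : G) (u : a.U.carrier), psiPred a u → psiPred a (g • u) := by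
  intro g u hu u' hu'
  have h1 : a.i (g⁻¹ • u') = a.i u := by
    rw [MulActionHom.map_smul, hu', MulActionHom.map_smul, inv_smul_smul]
  have h2 := hu _ h1
  rw [← h2, smul_inv_smul]

noncomputable def psiInc {M : SemiMackey G} {X : FinGSet G} (a : PreT M X) :
    (subFinG a.U (psiPred a) (psiPred_smul a)).carrier →[G] a.U.carrier :=
  subIncl a.U (psiPred a) (psiPred_smul a)

/-- The degree-one invariant. -/
noncomputable def Psi0 {M : SemiMackey G} {X : FinGSet G} (a : PreT M X) : M.obj X :=
  M.tr (gcomp a.j (gcomp a.i (psiInc a))) (M.res (psiInc a) a.u)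

noncomputable def psiSet {M : SemiMackey G} {X : FinGSet G} (a : PreT M X) : FinGSet G :=
  subFinG a.U (psiPred a) (psiPred_smul a)

noncomputable def psiThetaEquiv (M : SemiMackey G) (X : FinGSet G) (x : M.obj X) :
    (psiSet (thetaPre M X x)).carrier ≃ X.carrier :=
  subAllEquiv _ (fun u u' h => h)

theorem psi_theta (M : SemiMackey G) (X : FinGSet G) (x : M.obj X) :
    Psi0 (thetaPre M X x) = x := by
  have he : IsEquivariant G ⇑(psiThetaEquiv M X x) := fun g p => rfl
  show M.tr (gcomp (thetaPre M X x).j (gcomp (thetaPre M X x).i (psiInc (thetaPre M X x))))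
      (M.res (psiInc (thetaPre M X x)) x) = x
  have h2 : gcomp (thetaPre M X x).j (gcomp (thetaPre M X x).i (psiInc (thetaPre M X x)))
      = eqHom (psiThetaEquiv M X x) he := hom_ext (fun p => rfl)
  have h1 : psiInc (thetaPre M X x) = eqHom (psiThetaEquiv M X x) he :=
    hom_ext (fun p => rfl)
  erw [h2, h1, tr_res_iso]

noncomputable def psiSubEquiv {M : SemiMackey G} {X : FinGSet G} (a b : PreT M X)
    (f : b.U.carrier ≃ a.U.carrier)
    (hmem : ∀ u, psiPred b u → psiPred a (f u))
    (hmem2 : ∀ q, psiPred a q → psiPred b (f.symm q)) :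
    (psiSet b).carrier ≃ (psiSet a).carrier :=
  subEquiv f (psiPred b) (psiPred a) hmem hmem2

theorem psi_iso (M : SemiMackey G) (X : FinGSet G) {a b : PreT M X}
    (h : IsoRel M X a b) : Psi0 a = Psi0 b := by
  obtain ⟨f, g, hf, hg, h1, h2, h3⟩ := h
  have hmem : ∀ u : b.U.carrier, psiPred b u → psiPred a (f u) := by
    intro u hu u' hu'
    have e1 : a.i (f (f.symm u')) = g (b.i (f.symm u')) := h1 (f.symm u')
    rw [f.apply_symm_apply] at e1
    have e2 : g (b.i (f.symm u')) = g (b.i u) := by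
      rw [← e1, hu', h1 u]
    have e3 : b.i (f.symm u') = b.i u := g.injective e2
    have e4 := hu _ e3
    rw [← e4, f.apply_symm_apply]
  have hmem' : ∀ u : b.U.carrier, psiPred a (f u) → psiPred b u := by
    intro u hu u' hu'
    have e1 : a.i (f u') = a.i (f u) := by rw [h1 u', h1 u, hu']
    exact f.injective (hu _ e1)
  have hmem2 : ∀ q, psiPred a q → psiPred b (f.symm q) := by
    intro q hq
    refine hmem' (f.symm q) ?_
    have hfq : f (f.symm q) = q := f.apply_symm_apply q
    rw [hfq]
    exact hq
  have hf1 : IsEquivariant G ⇑(psiSubEquiv a b f hmem hmem2) := by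
    intro g0 p
    exact Subtype.ext (hf g0 p.1)
  show M.tr (gcomp a.j (gcomp a.i (psiInc a))) (M.res (psiInc a) a.u)
      = M.tr (gcomp b.j (gcomp b.i (psiInc b))) (M.res (psiInc b) b.u)
  rw [← h3, M.res_comp]
  refine (tr_res_transport M (psiSubEquiv a b f hmem hmem2) hf1
    (gcomp b.j (gcomp b.i (psiInc b)))
    (gcomp (MulActionHom.mk ⇑f hf) (psiInc b))
    (gcomp a.j (gcomp a.i (psiInc a))) (psiInc a)
    (fun p => ?_) (fun p => rfl) a.u).symm
  show a.j (a.i (f p.1)) = b.j (b.i p.1)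
  rw [h1 p.1, h2 (b.i p.1)]

end Psi

section Psi2
set_option linter.unusedVariables false
variable {G : Type} [Group G]

noncomputable def psiAddEquiv (M : SemiMackey G) {X : FinGSet G} (a b : PreT M X) :
    (psiSet a).carrier ⊕ (psiSet b).carrier ≃ (psiSet (addPre M a b)).carrier where
  toFun := fun s => match s with
    | .inl p => ⟨Sum.inl p.1, by
        intro u' hu'
        cases u' with
        | inl u0 => exact congrArg Sum.inl (p.2 u0 (Sum.inl_injective hu'))
        | inr u0 => exact nomatch hu'⟩
    | .inr p => ⟨Sum.inr p.1, by
        intro u' hu'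
        cases u' with
        | inr u0 => exact congrArg Sum.inr (p.2 u0 (Sum.inr_injective hu'))
        | inl u0 => exact nomatch hu'⟩
  invFun := fun p => match p with
    | ⟨Sum.inl u, hu⟩ => Sum.inl ⟨u, fun u' hu' => by
        have h0 := hu (Sum.inl u') (congrArg Sum.inl hu')
        exact Sum.inl_injective h0⟩
    | ⟨Sum.inr u, hu⟩ => Sum.inr ⟨u, fun u' hu' => by
        have h0 := hu (Sum.inr u') (congrArg Sum.inr hu')
        exact Sum.inr_injective h0⟩
  left_inv := fun s => by rcases s with p | p <;> rfl
  right_inv := fun p => by rcases p with ⟨u | u, hu⟩ <;> rfl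

theorem psi_add (M : SemiMackey G) {X : FinGSet G} (a b : PreT M X) :
    Psi0 (addPre M a b) = M.add (Psi0 a) (Psi0 b) := by
  have hδ : IsEquivariant G ⇑(psiAddEquiv M a b) := by
    rintro g0 (p | p) <;> exact Subtype.ext rfl
  show M.tr (gcomp (addPre M a b).j (gcomp (addPre M a b).i (psiInc (addPre M a b))))
      (M.res (psiInc (addPre M a b)) (M.pairElt a.u b.u)) = _
  have htrans := tr_res_transport (P := sumG (psiSet a) (psiSet b)) M
    (psiAddEquiv M a b) hδ
    (sumElimHom (gcomp a.j (gcomp a.i (psiInc a))) (gcomp b.j (gcomp b.i (psiInc b))))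
    (sumMapHom (psiInc a) (psiInc b))
    (gcomp (addPre M a b).j (gcomp (addPre M a b).i (psiInc (addPre M a b))))
    (psiInc (addPre M a b))
    (fun p => by rcases p with p | p <;> rfl)
    (fun p => by rcases p with p | p <;> rfl)
    (M.pairElt a.u b.u)
  erw [← htrans, res_sumMap_pair, tr_sumElim]
  rfl

/-- The middle-object comparison for the distributor relation. -/
noncomputable def distribTheta (M : SemiMackey G) {X W U V : FinGSet G}
    (k : W.carrier →[G] U.carrier) (i : U.carrier →[G] V.carrier)
    (j : V.carrier →[G] X.carrier) (u0 : M.obj U) (u1 : M.obj (mkG G (ECan k i))) :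
    (Pb (psiInc (⟨U, V, i, j, u0⟩ : PreT M X)) k)
      ≃ (psiSet (⟨mkG G (ECan k i), mkG G (Sec k i), pi2Hom k i,
          gcomp j (pHom k i), u1⟩ : PreT M X)).carrier where
  toFun := fun p =>
    ⟨pbMk i (pHom k i) p.1.1.1
      (⟨i p.1.1.1, fun y hy => p.1.2, fun y hy => by
        show k p.1.2 = y
        have h5 : y = p.1.1.1 := p.1.1.2 y hy
        rw [h5]
        exact p.2.symm⟩ : Sec k i) rfl,
     by
      intro q' hq'
      have hq2 : q'.1.2 = _ := hq'
      refine Subtype.ext (Prod.ext ?_ hq2)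
      have h6 := q'.2
      rw [hq2] at h6
      exact p.1.1.2 q'.1.1 h6⟩
  invFun := fun Q =>
    pbMk (psiInc (⟨U, V, i, j, u0⟩ : PreT M X)) k
      ⟨Q.1.1.1, fun u' hu' => by
        have hq' := Q.2 (pbMk i (pHom k i) u' Q.1.1.2 (hu'.trans Q.1.2)) rfl
        exact congrArg (fun z => z.1.1) hq'⟩
      (Q.1.1.2.sec Q.1.1.1 Q.1.2)
      (Q.1.1.2.isSec Q.1.1.1 Q.1.2).symm
  left_inv := fun p => Subtype.ext (Prod.ext (Subtype.ext rfl) rfl)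
  right_inv := fun Q => by
    refine Subtype.ext (Subtype.ext (Prod.ext rfl ?_))
    show (⟨i Q.1.1.1, fun y hy => Q.1.1.2.sec Q.1.1.1 Q.1.2, _⟩ : Sec k i) = Q.1.1.2
    refine Sec.ext' ?_ ?_
    · exact Q.1.2
    · intro y hy hy'
      show Q.1.1.2.sec Q.1.1.1 Q.1.2 = Q.1.1.2.sec y hy'
      have hyu : Q.1.1.1 = y := by
        have hq' := Q.2 (pbMk i (pHom k i) y Q.1.1.2 hy') rfl
        exact (congrArg (fun z => z.1.1) hq').symm
      exact Sec.sec_congr _ hyu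

theorem distribTheta_equivariant (M : SemiMackey G) {X W U V : FinGSet G}
    (k : W.carrier →[G] U.carrier) (i : U.carrier →[G] V.carrier)
    (j : V.carrier →[G] X.carrier) (u0 : M.obj U) (u1 : M.obj (mkG G (ECan k i))) :
    IsEquivariant G ⇑(distribTheta M k i j u0 u1) := by
  intro g0 p
  refine Subtype.ext (Subtype.ext (Prod.ext ?_ ?_))
  · rfl
  · refine Sec.ext' ?_ ?_
    · show i (g0 • p.1.1.1) = g0 • i p.1.1.1
      exact MulActionHom.map_smul i g0 p.1.1.1
    · intro y hy hy'
      have hinner : i (g0⁻¹ • y) = i p.1.1.1 := by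
        have hy2 : i y = g0 • i p.1.1.1 := hy'
        rw [MulActionHom.map_smul, hy2, inv_smul_smul]
      exact (Sec.smul_sec g0 ((distribTheta M k i j u0 u1 p).1.1.2) y hy' hinner).symm

theorem psi_distrib (M : SemiMackey G) {X : FinGSet G}
    {W U V A B : FinGSet G} (k : W.carrier →[G] U.carrier)
    (i : U.carrier →[G] V.carrier) (j : V.carrier →[G] X.carrier)
    (f : A.carrier →[G] W.carrier) (g : A.carrier →[G] B.carrier)
    (h : B.carrier →[G] V.carrier) (hd : IsDistributor k i f g h) (w : M.obj W) :
    Psi0 (⟨U, V, i, j, M.tr k w⟩ : PreT M X)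
      = Psi0 (⟨A, B, g, gcomp j h, M.res f w⟩ : PreT M X) := by
  obtain ⟨α, β, hα, hβ, hfα, hgβ, hhβ⟩ := hd
  -- Step A: the canonical representative is isomorphic to the given one
  have hstepA : Psi0 (⟨mkG G (ECan k i), mkG G (Sec k i), pi2Hom k i,
      gcomp j (pHom k i), M.res (evalHom k i) w⟩ : PreT M X)
      = Psi0 (⟨A, B, g, gcomp j h, M.res f w⟩ : PreT M X) := by
    refine psi_iso M X ⟨α, β, hα, hβ, ?_, ?_, ?_⟩
    · intro x
      exact (hgβ x).symm
    · intro σ'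
      show j ((β σ').pt) = j (h σ')
      rw [hhβ σ']
    · erw [M.res_comp]
      have h4 : gcomp (evalHom k i) (MulActionHom.mk ⇑α hα) = f :=
        hom_ext (fun x => hfα x)
      exact congrArg (fun t => M.res t w) h4
  rw [← hstepA]
  -- Step B: the canonical computation via the pullback
  show M.tr (gcomp j (gcomp i (psiInc (⟨U, V, i, j, M.tr k w⟩ : PreT M X))))
      (M.res (psiInc (⟨U, V, i, j, M.tr k w⟩ : PreT M X)) (M.tr k w))
    = M.tr (gcomp (gcomp j (pHom k i)) (gcomp (pi2Hom k i)
        (psiInc (⟨mkG G (ECan k i), mkG G (Sec k i), pi2Hom k i, gcomp j (pHom k i),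
          M.res (evalHom k i) w⟩ : PreT M X))))
      (M.res (psiInc (⟨mkG G (ECan k i), mkG G (Sec k i), pi2Hom k i, gcomp j (pHom k i),
          M.res (evalHom k i) w⟩ : PreT M X)) (M.res (evalHom k i) w))
  erw [M.mackey (psiInc (⟨U, V, i, j, M.tr k w⟩ : PreT M X)) k w, M.tr_comp, M.res_comp]
  exact tr_res_transport M
    (distribTheta M k i j (M.tr k w) (M.res (evalHom k i) w))
    (distribTheta_equivariant M k i j (M.tr k w) (M.res (evalHom k i) w))
    _ _ _ _ (fun p => rfl) (fun p => rfl) w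

theorem psi_strel (M : SemiMackey G) (X : FinGSet G) {a b : PreT M X}
    (h : STRel M X a b) : Psi0 a = Psi0 b := by
  cases h with
  | iso h => exact psi_iso M X h
  | distrib k i j f g h hd w => exact psi_distrib M k i j f g h hd w

end Psi2

section Assembly
set_option linter.unusedVariables false
variable {G : Type} [Group G]

/-- `BurnIso` is an equivalence relation. -/
def bSetoid (X : FinGSet G) : Setoid (BurnPre G X) :=
  ⟨BurnIso, ⟨burnIso_refl, burnIso_symm, burnIso_trans⟩⟩

theorem phi_strel (M : SemiMackey G) (X : FinGSet G) {a b : PreT M X}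
    (h : STRel M X a b) :
    Quotient.mk (bSetoid X) (Phi0 a) = Quotient.mk (bSetoid X) (Phi0 b) := by
  cases h with
  | iso h => exact Quotient.sound (phi_iso h)
  | distrib k i j f g h hd w => exact Quotient.sound (phi_distrib k i j f g h hd w)

theorem res_refl (N : SemiMackey G) {U : FinGSet G}
    (hf : IsEquivariant G ⇑(Equiv.refl U.carrier)) (z : N.obj U) :
    N.res (MulActionHom.mk ⇑(Equiv.refl U.carrier) hf) z = z := by
  have h : (MulActionHom.mk ⇑(Equiv.refl U.carrier) hf : U.carrier →[G] U.carrier)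
      = gid G U.carrier := hom_ext (fun x => rfl)
  rw [h, N.res_id]

end Assembly
/-- Let `T(M) = ⊕ₙ Tⁿ(M)` be the free Tambara functor on the Mackey
functor `M` (presented by a Tambara functor `T` together with a levelwise group
completion `c` of `sT(M)`, as in the characterization below).  Then the unique map of
Tambara functors `A → T(M)` from the Burnside Mackey functor induces an isomorphism
`A ≅ T⁰(M)` (on differences of classes of `G`-sets over `X`), and the universal map
`θ_M : M → T(M)` induces an isomorphism of Mackey functors `M ≅ T¹(M)`. -/
theorem statement8 [Finite G] (M : Mackey G)
    (T : Tambara G) (c : ∀ X : FinGSet G, PreT M.toSemiMackey X → T.obj X)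
    (hc_rel : ∀ (X : FinGSet G) (a b : PreT M.toSemiMackey X),
      Quot.mk (STRel M.toSemiMackey X) a = Quot.mk (STRel M.toSemiMackey X) b →
        c X a = c X b)
    (hc_tr : ∀ {X Y : FinGSet G} (f : X.carrier →[G] Y.carrier) (a : PreT M.toSemiMackey X),
      c Y (trPre M.toSemiMackey f a) = T.tr f (c X a))
    (hc_res : ∀ {X Y : FinGSet G} (f : Y.carrier →[G] X.carrier) (a : PreT M.toSemiMackey X),
      c Y (resPre M.toSemiMackey f a) = T.res f (c X a))
    (hc_nm : ∀ {X Y : FinGSet G} (f : X.carrier →[G] Y.carrier) (a : PreT M.toSemiMackey X),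
      c Y (normPre M.toSemiMackey f a) = T.nm f (c X a))
    (hc_add : ∀ (X : FinGSet G) (a b : PreT M.toSemiMackey X),
      c X (addPre M.toSemiMackey a b) = T.toSemiMackey.add (c X a) (c X b))
    (hc_sur : ∀ (X : FinGSet G) (t : T.obj X), ∃ a b : PreT M.toSemiMackey X,
      T.toSemiMackey.add t (c X b) = c X a)
    (hc_inj : ∀ (X : FinGSet G) (a b : PreT M.toSemiMackey X),
      c X a = c X b ↔ ∃ k : PreT M.toSemiMackey X,
        Quot.mk (STRel M.toSemiMackey X) (addPre M.toSemiMackey a k) =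
          Quot.mk (STRel M.toSemiMackey X) (addPre M.toSemiMackey b k))
    (hc_free : ∀ (R : Tambara G) (φ : SMackHom M.toSemiMackey R.toSemiMackey),
      ∃! F : STambHom T.toSemiTambara R.toSemiTambara,
        ∀ (X : FinGSet G) (x : M.obj X),
          F.app X (c X (thetaPre M.toSemiMackey X x)) = φ.app X x) :
    -- `A ≅ T⁰(M)`: every element of the degree-0 part is a difference of classes of
    -- `G`-sets over `X`, ...
    (∀ (X : FinGSet G) (t : T.obj X),
      (∃ a b : PreT M.toSemiMackey X, DegN 0 a ∧ DegN 0 b ∧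
          T.toSemiMackey.add t (c X b) = c X a) →
      ∃ s₁ s₂ : BurnPre G X,
        T.toSemiMackey.add t (c X (bPair M.toSemiMackey s₂)) = c X (bPair M.toSemiMackey s₁)) ∧
    -- ... and two differences agree exactly when they agree in the Burnside group:
    (∀ (X : FinGSet G) (s₁ s₂ s₁' s₂' : BurnPre G X),
      T.toSemiMackey.add (c X (bPair M.toSemiMackey s₁)) (c X (bPair M.toSemiMackey s₂')) =
        T.toSemiMackey.add (c X (bPair M.toSemiMackey s₁')) (c X (bPair M.toSemiMackey s₂)) ↔
      BurnIso (⟨sumG s₁.A s₂'.A, sumElimHom s₁.f s₂'.f⟩ : BurnPre G X)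
        ⟨sumG s₁'.A s₂.A, sumElimHom s₁'.f s₂.f⟩) ∧
    -- `M ≅ T¹(M)` via `θ_M`:
    (∀ X : FinGSet G,
      Set.BijOn (fun x : M.obj X => c X (thetaPre M.toSemiMackey X x)) Set.univ
        {t : T.obj X | ∃ a b : PreT M.toSemiMackey X, DegN 1 a ∧ DegN 1 b ∧
          T.toSemiMackey.add t (c X b) = c X a}) := by

  classical
  -- `c` of θ of zero is the zero of `T`
  have czero : ∀ X : FinGSet G,
      c X (thetaPre M.toSemiMackey X (M.toSemiMackey.zero X)) = T.toSemiMackey.zero X := by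
    intro X
    have h1 : c X (thetaPre M.toSemiMackey X (M.toSemiMackey.zero X))
        = c X ⟨emptyG G, emptyG G, gid G (emptyG G).carrier, initHom X, (M.toSemiMackey.nonempty (emptyG G)).some⟩ :=
      hc_rel X _ _ (theta_tr M.toSemiMackey X (initHom X) (M.toSemiMackey.nonempty (emptyG G)).some)
    have h2 : c X ⟨emptyG G, emptyG G, gid G (emptyG G).carrier, initHom X, (M.toSemiMackey.nonempty (emptyG G)).some⟩
        = c X (trPre M.toSemiMackey (initHom X)
            ⟨emptyG G, emptyG G, gid G (emptyG G).carrier, gid G (emptyG G).carrier, (M.toSemiMackey.nonempty (emptyG G)).some⟩) :=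
      hc_rel X _ _ (quot_mk_eq M.toSemiMackey X _ _ _ _ _ _ (fun x => rfl) (fun v => rfl) rfl)
    rw [h1, h2, hc_tr]
    show T.toSemiMackey.tr (initHom X) _ = T.toSemiMackey.tr (initHom X) _
    exact congrArg _ (@Subsingleton.elim _ T.toSemiMackey.empty_subsingleton _ _)
  -- `c` of θ is additive
  have cadd : ∀ (X : FinGSet G) (u v : M.toSemiMackey.obj X),
      c X (thetaPre M.toSemiMackey X (M.toSemiMackey.add u v))
        = T.toSemiMackey.add (c X (thetaPre M.toSemiMackey X u)) (c X (thetaPre M.toSemiMackey X v)) := by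
    intro X u v
    rw [hc_rel X _ _ (theta_add M.toSemiMackey X u v), hc_add]
  refine ⟨?_, ?_, ?_⟩
  · -- Part 1
    intro X t ⟨a, b, hda, hdb, heq⟩
    refine ⟨⟨a.V, a.j⟩, ⟨b.V, b.j⟩, ?_⟩
    rw [← hc_rel X a _ (deg0_quot M.toSemiMackey X a hda), ← hc_rel X b _ (deg0_quot M.toSemiMackey X b hdb)]
    exact heq
  · -- Part 2
    intro X s₁ s₂ s₁' s₂'
    constructor
    · intro heq
      have e1 : c X (addPre M.toSemiMackey (bPair M.toSemiMackey s₁) (bPair M.toSemiMackey s₂'))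
          = c X (addPre M.toSemiMackey (bPair M.toSemiMackey s₁') (bPair M.toSemiMackey s₂)) := by
        rw [hc_add, hc_add]
        exact heq
      obtain ⟨kk, hkk⟩ := (hc_inj X _ _).1 e1
      have hlift := congrArg (Quot.lift (fun a => Quotient.mk (bSetoid X) (Phi0 a))
        (fun a b h => phi_strel M.toSemiMackey X h)) hkk
      have hbi : BurnIso (Phi0 (addPre M.toSemiMackey (addPre M.toSemiMackey (bPair M.toSemiMackey s₁) (bPair M.toSemiMackey s₂')) kk))
          (Phi0 (addPre M.toSemiMackey (addPre M.toSemiMackey (bPair M.toSemiMackey s₁') (bPair M.toSemiMackey s₂)) kk)) :=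
        Quotient.exact hlift
      have hred : ∀ (u v : BurnPre G X),
          BurnIso (Phi0 (addPre M.toSemiMackey (addPre M.toSemiMackey (bPair M.toSemiMackey u) (bPair M.toSemiMackey v)) kk))
            (bSum (bSum u v) (Phi0 kk)) := by
        intro u v
        refine burnIso_trans (phi_add M.toSemiMackey _ kk) (burnIso_bSum ?_ (burnIso_refl _))
        refine burnIso_trans (phi_add M.toSemiMackey _ _) (burnIso_bSum ?_ ?_)
        · exact phi_bPair M.toSemiMackey u
        · exact phi_bPair M.toSemiMackey v
      have hcan : BurnIso (bSum (bSum s₁ s₂') (Phi0 kk)) (bSum (bSum s₁' s₂) (Phi0 kk)) :=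
        burnIso_trans (burnIso_symm (hred s₁ s₂')) (burnIso_trans hbi (hred s₁' s₂))
      exact burn_cancel _ _ _ hcan
    · intro hiso
      obtain ⟨e2, he2, hov2⟩ := burnIso_symm hiso
      rw [← hc_add, ← hc_add]
      refine hc_rel X _ _ ?_
      refine Quot.sound (STRel.iso ?_)
      refine ⟨Equiv.refl _, e2, fun g x => rfl, he2, ?_, ?_, ?_⟩
      · rintro (u' | u') <;> exact Empty.elim u'
      · intro v'
        exact hov2 v'
      · exact res_refl M.toSemiMackey _ _
  · -- Part 3
    intro X
    refine ⟨?_, ?_, ?_⟩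
    · -- MapsTo
      intro x _
      refine ⟨thetaPre M.toSemiMackey X x, thetaPre M.toSemiMackey X (M.toSemiMackey.zero X),
        degN_theta M.toSemiMackey X x, degN_theta M.toSemiMackey X (M.toSemiMackey.zero X), ?_⟩
      rw [czero X, add_zero' T.toSemiMackey]
    · -- InjOn
      intro x _ y _ hxy
      obtain ⟨kk, hkk⟩ := (hc_inj X _ _).1 hxy
      have hlift := congrArg (Quot.lift (fun a => Psi0 a)
        (fun a b h => psi_strel M.toSemiMackey X h)) hkk
      have h1 : Psi0 (addPre M.toSemiMackey (thetaPre M.toSemiMackey X x) kk)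
          = Psi0 (addPre M.toSemiMackey (thetaPre M.toSemiMackey X y) kk) := hlift
      rw [psi_add, psi_add, psi_theta, psi_theta] at h1
      exact add_cancel' M.toSemiMackey M.hasNeg h1
    · -- SurjOn
      intro t ht
      obtain ⟨a, b, hda, hdb, heq⟩ := ht
      obtain ⟨xa, hqa⟩ := deg1_quot M.toSemiMackey X a hda
      obtain ⟨xb, hqb⟩ := deg1_quot M.toSemiMackey X b hdb
      rw [hc_rel X a _ hqa, hc_rel X b _ hqb] at heq
      obtain ⟨y, hy⟩ := M.hasNeg X xb
      refine ⟨M.toSemiMackey.add xa y, Set.mem_univ _, ?_⟩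
      show c X (thetaPre M.toSemiMackey X (M.toSemiMackey.add xa y)) = t
      rw [cadd X xa y, ← heq, add_assoc' T.toSemiMackey, ← cadd X xb y, hy, czero X,
        add_zero' T.toSemiMackey]
end Tamb
end

section
/- Let G be a finite group. Direct limits (colimits of directed systems) and reflexive coequalizers in the category Tamb(G) of Tambara functors exist and are created by the forgetful functor to Mack(G); consequently the free Tambara functor functor T : Mack(G) → Tamb(G), being left adjoint to the forgetful functor, preserves direct limits and reflexive coequalizers. -/
set_option autoImplicit false

namespace Tamb

variable {G : Type} [Group G]

section CoreCat

open CategoryTheory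

variable {G : Type} [Group G]

/-- The identity map of semi-Mackey functors. -/
def SMackHom.idH (M : SemiMackey G) : SMackHom M M where
  app _ x := x
  app_res _ _ := rfl
  app_tr _ _ := rfl

/-- Composition of maps of semi-Mackey functors. -/
def SMackHom.compH {M N P : SemiMackey G} (f : SMackHom M N) (g : SMackHom N P) :
    SMackHom M P where
  app X x := g.app X (f.app X x)
  app_res h y := by
    show g.app _ (f.app _ (M.res h y)) = P.res h (g.app _ (f.app _ y))
    rw [f.app_res, g.app_res]
  app_tr h x := by
    show g.app _ (f.app _ (M.tr h x)) = P.tr h (g.app _ (f.app _ x))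
    rw [f.app_tr, g.app_tr]

theorem SMackHom.extH {M N : SemiMackey G} {f g : SMackHom M N} (h : f.app = g.app) :
    f = g := by
  cases f; cases g; cases h; rfl

/-- The identity map of semi-Tambara functors. -/
def STambHom.idH (M : SemiTambara G) : STambHom M M :=
  ⟨SMackHom.idH M.toSemiMackey, fun _ _ => rfl⟩

/-- Composition of maps of semi-Tambara functors. -/
def STambHom.compH {M N P : SemiTambara G} (f : STambHom M N) (g : STambHom N P) :
    STambHom M P :=
  ⟨SMackHom.compH f.toSMackHom g.toSMackHom, fun h x => by
    show g.app _ (f.app _ (M.nm h x)) = P.nm h (g.app _ (f.app _ x))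
    rw [f.app_nm, g.app_nm]⟩

theorem STambHom.extH {M N : SemiTambara G} {f g : STambHom M N} (h : f.app = g.app) :
    f = g := by
  obtain ⟨⟨fa, fr, ft⟩, fn⟩ := f
  obtain ⟨⟨ga, gr, gt⟩, gn⟩ := g
  cases h
  rfl

/-- The category `Mack(G)` of Mackey functors over `G`. -/
instance : Category (Mackey G) where
  Hom M N := SMackHom M.toSemiMackey N.toSemiMackey
  id M := SMackHom.idH M.toSemiMackey
  comp f g := SMackHom.compH f g
  id_comp _ := SMackHom.extH rfl
  comp_id _ := SMackHom.extH rfl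
  assoc _ _ _ := SMackHom.extH rfl

/-- The category `Tamb(G)` of Tambara functors over `G`. -/
instance : Category (Tambara G) where
  Hom M N := STambHom M.toSemiTambara N.toSemiTambara
  id M := STambHom.idH M.toSemiTambara
  comp f g := STambHom.compH f g
  id_comp _ := STambHom.extH rfl
  comp_id _ := STambHom.extH rfl
  assoc _ _ _ := STambHom.extH rfl

/-- The forgetful functor `Tamb(G) → Mack(G)` (neglect of norms). -/
def forgetTM (G : Type) [Group G] : Tambara G ⥤ Mackey G where
  obj T := ⟨T.toSemiMackey, T.hasNeg⟩
  map f := f.toSMackHom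
  map_id _ := rfl
  map_comp _ _ := rfl

end CoreCat



open CategoryTheory CategoryTheory.Limits

section Statement10Aux

variable {G : Type} [Group G]

namespace SemiMackey

variable (M : SemiMackey G) {X Y : FinGSet G}

theorem pair_eq (x : M.obj X) (y : M.obj Y) :
    (M.res (inlHom X Y) (M.pairElt x y), M.res (inrHom X Y) (M.pairElt x y)) = (x, y) :=
  (Equiv.ofBijective _ (M.sum_bij X Y)).apply_symm_apply (x, y)

theorem res_inl_pair (x : M.obj X) (y : M.obj Y) :
    M.res (inlHom X Y) (M.pairElt x y) = x :=
  congrArg Prod.fst (M.pair_eq x y)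

theorem res_inr_pair (x : M.obj X) (y : M.obj Y) :
    M.res (inrHom X Y) (M.pairElt x y) = y :=
  congrArg Prod.snd (M.pair_eq x y)

theorem pair_injEq {z z' : M.obj (sumG X Y)}
    (h1 : M.res (inlHom X Y) z = M.res (inlHom X Y) z')
    (h2 : M.res (inrHom X Y) z = M.res (inrHom X Y) z') : z = z' :=
  (M.sum_bij X Y).injective (Prod.ext h1 h2)

theorem pair_res (z : M.obj (sumG X Y)) :
    M.pairElt (M.res (inlHom X Y) z) (M.res (inrHom X Y) z) = z :=
  M.pair_injEq (by rw [M.res_inl_pair]) (by rw [M.res_inr_pair])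

end SemiMackey

namespace SMackHom

variable {M N : SemiMackey G} (f : SMackHom M N) {X Y : FinGSet G}

theorem app_pairElt (x : M.obj X) (y : M.obj Y) :
    f.app (sumG X Y) (M.pairElt x y) = N.pairElt (f.app X x) (f.app Y y) :=
  N.pair_injEq
    (by rw [← f.app_res, M.res_inl_pair, N.res_inl_pair])
    (by rw [← f.app_res, M.res_inr_pair, N.res_inr_pair])

theorem app_zero (X : FinGSet G) : f.app X (M.zero X) = N.zero X := by
  unfold SemiMackey.zero
  rw [f.app_tr]
  haveI := N.empty_subsingleton
  congr 1
  exact Subsingleton.elim _ _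

theorem app_add (x y : M.obj X) :
    f.app X (M.add x y) = N.add (f.app X x) (f.app X y) := by
  unfold SemiMackey.add
  rw [f.app_tr, f.app_pairElt]

end SMackHom

/-- Type ascription of a morphism of Mackey functors to a `SMackHom`. -/
def mapp {A B : Mackey G} (f : A ⟶ B) :
    SMackHom A.toSemiMackey B.toSemiMackey := f

/-- Type ascription of a morphism of Tambara functors to a `STambHom`. -/
def tapp {A B : Tambara G} (f : A ⟶ B) :
    STambHom A.toSemiTambara B.toSemiTambara := f

/-- The forgetful functor from Tambara functors to Mackey functors reflects
isomorphisms. -/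
instance : (forgetTM G).ReflectsIsomorphisms where
  reflects {A B} φ hiso := by
    obtain ⟨ψ, hc1, hc2⟩ := hiso.out
    have h1 : ∀ (X : FinGSet G) (a : A.obj X),
        (mapp ψ).app X ((tapp φ).app X a) = a := fun X a =>
      congrArg (fun t => SMackHom.app t X a) hc1
    have h2 : ∀ (X : FinGSet G) (b : B.obj X),
        (tapp φ).app X ((mapp ψ).app X b) = b := fun X b =>
      congrArg (fun t => SMackHom.app t X b) hc2
    refine ⟨⟨show STambHom B.toSemiTambara A.toSemiTambara from
      { toSMackHom := mapp ψ
        app_nm := fun {X Y} f x => ?_ }, ?_, ?_⟩⟩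
    · conv_lhs => rw [← h2 X x]
      exact (congrArg ((mapp ψ).app Y) ((tapp φ).app_nm f ((mapp ψ).app X x))).symm.trans (h1 Y _)
    · exact STambHom.extH (congrArg SMackHom.app hc1)
    · exact STambHom.extH (congrArg SMackHom.app hc2)

section Directed

variable {J : Type} [Preorder J] (F : J ⥤ Tambara G)

/-- Representatives for the directed colimit. -/
def DObj (X : FinGSet G) : Type 1 := Σ j : J, (F.obj j).obj X

/-- The transition maps of a directed system of Tambara functors. -/
def tmap {j k : J} (h : j ≤ k) :
    STambHom (F.obj j).toSemiTambara (F.obj k).toSemiTambara :=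
  tapp (F.map (homOfLE h))

theorem tmap_tmap {i j k : J} (hij : i ≤ j) (hjk : j ≤ k) (X : FinGSet G)
    (x : (F.obj i).obj X) :
    (tmap F hjk).app X ((tmap F hij).app X x) = (tmap F (hij.trans hjk)).app X x := by
  have h : tmap F (hij.trans hjk) = STambHom.compH (tmap F hij) (tmap F hjk) := by
    show tapp (F.map (homOfLE (hij.trans hjk))) = _
    rw [← homOfLE_comp hij hjk, F.map_comp]
    rfl
  rw [h]
  rfl

theorem tmap_refl (j : J) (X : FinGSet G) (x : (F.obj j).obj X) :
    (tmap F (le_refl j)).app X x = x := by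
  have h : tmap F (le_refl j) = STambHom.idH _ := by
    show tapp (F.map (homOfLE (le_refl j))) = _
    have h2 : homOfLE (le_refl j) = 𝟙 j := rfl
    rw [h2, F.map_id]
    rfl
  rw [h]
  rfl

/-- The one-step relation generating the directed colimit. -/
def DStep (X : FinGSet G) (p q : DObj F X) : Prop :=
  ∃ h : p.1 ≤ q.1, (tmap F h).app X p.2 = q.2

/-- Equality at some later common stage. -/
def DRel (X : FinGSet G) (p q : DObj F X) : Prop :=
  ∃ (l : J) (hp : p.1 ≤ l) (hq : q.1 ≤ l),
    (tmap F hp).app X p.2 = (tmap F hq).app X q.2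

theorem drel_refl (X : FinGSet G) (p : DObj F X) : DRel F X p p :=
  ⟨p.1, le_refl _, le_refl _, rfl⟩

theorem drel_symm {X : FinGSet G} {p q : DObj F X} (h : DRel F X p q) :
    DRel F X q p := by
  obtain ⟨l, hp, hq, e⟩ := h
  exact ⟨l, hq, hp, e.symm⟩

theorem drel_trans [IsDirected J (· ≤ ·)] {X : FinGSet G} {p q r : DObj F X}
    (h1 : DRel F X p q) (h2 : DRel F X q r) : DRel F X p r := by
  obtain ⟨l1, hp1, hq1, e1⟩ := h1
  obtain ⟨l2, hq2, hr2, e2⟩ := h2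
  obtain ⟨l, hl1, hl2⟩ := directed_of (· ≤ ·) l1 l2
  refine ⟨l, hp1.trans hl1, hr2.trans hl2, ?_⟩
  rw [← tmap_tmap F hp1 hl1, e1, tmap_tmap, ← tmap_tmap F hr2 hl2, ← e2, tmap_tmap]

theorem drel_of_dstep {X : FinGSet G} {p q : DObj F X} (h : DStep F X p q) :
    DRel F X p q := by
  obtain ⟨h, e⟩ := h
  exact ⟨q.1, h, le_refl _, by rw [e, tmap_refl]⟩

theorem mk_eq_of_drel {X : FinGSet G} {p q : DObj F X} (h : DRel F X p q) :
    Quot.mk (DStep F X) p = Quot.mk (DStep F X) q := by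
  obtain ⟨l, hp, hq, e⟩ := h
  have h1 : Quot.mk (DStep F X) p = Quot.mk (DStep F X) ⟨l, (tmap F hp).app X p.2⟩ :=
    Quot.sound ⟨hp, rfl⟩
  have h2 : Quot.mk (DStep F X) q = Quot.mk (DStep F X) ⟨l, (tmap F hq).app X q.2⟩ :=
    Quot.sound ⟨hq, rfl⟩
  rw [h1, h2, e]

theorem drel_of_mk_eq [IsDirected J (· ≤ ·)] {X : FinGSet G} {p q : DObj F X}
    (h : Quot.mk (DStep F X) p = Quot.mk (DStep F X) q) : DRel F X p q := by
  have h2 := congrArg (Quot.lift (fun q => DRel F X p q)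
    (fun a b hab => propext
      ⟨fun hpa => drel_trans F hpa (drel_of_dstep F hab),
       fun hpb => drel_trans F hpb (drel_symm F (drel_of_dstep F hab))⟩)) h
  exact cast h2 (drel_refl F X p)

variable [IsDirected J (· ≤ ·)] [Nonempty J]

/-- The directed colimit of a directed system of Tambara functors, as a
semi-Tambara functor. -/
noncomputable def colimST : SemiTambara G where
  obj X := Quot (DStep F X)
  nonempty X := ⟨Quot.mk _ ⟨Classical.arbitrary J, ((F.obj _).nonempty X).some⟩⟩
  res {X Y} u := Quot.lift (fun p => Quot.mk _ ⟨p.1, (F.obj p.1).res u p.2⟩)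
    (fun p q ⟨h, e⟩ => Quot.sound ⟨h, by rw [(tmap F h).app_res, e]⟩)
  tr {X Y} u := Quot.lift (fun p => Quot.mk _ ⟨p.1, (F.obj p.1).tr u p.2⟩)
    (fun p q ⟨h, e⟩ => Quot.sound ⟨h, by rw [(tmap F h).app_tr, e]⟩)
  nm {X Y} u := Quot.lift (fun p => Quot.mk _ ⟨p.1, (F.obj p.1).nm u p.2⟩)
    (fun p q ⟨h, e⟩ => Quot.sound ⟨h, by rw [(tmap F h).app_nm, e]⟩)
  res_id {X} x := by
    induction x using Quot.ind with
    | _ p => exact congrArg (fun z => Quot.mk (DStep F X) ⟨p.1, z⟩) ((F.obj p.1).res_id p.2)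
  res_comp {X Y Z} i j z := by
    induction z using Quot.ind with
    | _ p => exact congrArg (fun z => Quot.mk (DStep F X) ⟨p.1, z⟩) ((F.obj p.1).res_comp i j p.2)
  tr_id {X} x := by
    induction x using Quot.ind with
    | _ p => exact congrArg (fun z => Quot.mk (DStep F X) ⟨p.1, z⟩) ((F.obj p.1).tr_id p.2)
  tr_comp {X Y Z} i j x := by
    induction x using Quot.ind with
    | _ p => exact congrArg (fun z => Quot.mk (DStep F Z) ⟨p.1, z⟩) ((F.obj p.1).tr_comp i j p.2)
  nm_id {X} x := by
    induction x using Quot.ind with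
    | _ p => exact congrArg (fun z => Quot.mk (DStep F X) ⟨p.1, z⟩) ((F.obj p.1).nm_id p.2)
  nm_comp {X Y Z} i j x := by
    induction x using Quot.ind with
    | _ p => exact congrArg (fun z => Quot.mk (DStep F Z) ⟨p.1, z⟩) ((F.obj p.1).nm_comp i j p.2)
  mackey {X Y Z} j i y := by
    induction y using Quot.ind with
    | _ p => exact congrArg (fun z => Quot.mk (DStep F X) ⟨p.1, z⟩) ((F.obj p.1).mackey j i p.2)
  nm_res {X Y Z} j i y := by
    induction y using Quot.ind with
    | _ p => exact congrArg (fun z => Quot.mk (DStep F X) ⟨p.1, z⟩) ((F.obj p.1).nm_res j i p.2)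
  distrib {X Y Z A B} i j f g h hd x := by
    induction x using Quot.ind with
    | _ p =>
      exact congrArg (fun z => Quot.mk (DStep F Z) ⟨p.1, z⟩)
        ((F.obj p.1).distrib i j f g h hd p.2)
  empty_subsingleton := by
    constructor
    intro a b
    induction a using Quot.ind with
    | _ p =>
      induction b using Quot.ind with
      | _ q =>
        obtain ⟨l, hp, hq⟩ := directed_of (· ≤ ·) p.1 q.1
        refine mk_eq_of_drel F ⟨l, hp, hq, ?_⟩
        haveI := (F.obj l).empty_subsingleton
        exact Subsingleton.elim _ _
  sum_bij X Y := by
    constructor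
    · intro z z' h
      have e1 := congrArg Prod.fst h
      have e2 := congrArg Prod.snd h
      induction z using Quot.ind with
      | _ p =>
        induction z' using Quot.ind with
        | _ q =>
          obtain ⟨l1, hp1, hq1, f1⟩ := drel_of_mk_eq F e1
          obtain ⟨l2, hp2, hq2, f2⟩ := drel_of_mk_eq F e2
          obtain ⟨l, hl1, hl2⟩ := directed_of (· ≤ ·) l1 l2
          refine mk_eq_of_drel F ⟨l, hp1.trans hl1, hq1.trans hl1, ?_⟩
          refine (F.obj l).toSemiMackey.pair_injEq ?_ ?_
          · have f1' : (tmap F hp1).app X ((F.obj p.1).res (inlHom X Y) p.2)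
                = (tmap F hq1).app X ((F.obj q.1).res (inlHom X Y) q.2) := f1
            rw [← tmap_tmap F hp1 hl1, ← tmap_tmap F hq1 hl1,
              ← (tmap F hl1).app_res, ← (tmap F hl1).app_res,
              ← (tmap F hp1).app_res, ← (tmap F hq1).app_res, f1']
          · have f2' : (tmap F hp2).app Y ((F.obj p.1).res (inrHom X Y) p.2)
                = (tmap F hq2).app Y ((F.obj q.1).res (inrHom X Y) q.2) := f2
            rw [← tmap_tmap F hp2 hl2, ← tmap_tmap F hq2 hl2,
              ← (tmap F hl2).app_res, ← (tmap F hl2).app_res,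
              ← (tmap F hp2).app_res, ← (tmap F hq2).app_res, f2']
    · rintro ⟨w1, w2⟩
      induction w1 using Quot.ind with
      | _ p =>
        induction w2 using Quot.ind with
        | _ q =>
          obtain ⟨l, hp, hq⟩ := directed_of (· ≤ ·) p.1 q.1
          refine ⟨Quot.mk _ ⟨l, (F.obj l).toSemiMackey.pairElt
            ((tmap F hp).app X p.2) ((tmap F hq).app Y q.2)⟩, Prod.ext ?_ ?_⟩
          · show Quot.mk (DStep F X) ⟨l, (F.obj l).res (inlHom X Y) _⟩ = _
            rw [(F.obj l).toSemiMackey.res_inl_pair]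
            exact (Quot.sound ⟨hp, rfl⟩).symm
          · show Quot.mk (DStep F Y) ⟨l, (F.obj l).res (inrHom X Y) _⟩ = _
            rw [(F.obj l).toSemiMackey.res_inr_pair]
            exact (Quot.sound ⟨hq, rfl⟩).symm

/-- The insertion of a stage into the directed colimit, as a map of semi-Mackey
functors. -/
def iotaSM (j : J) :
    SMackHom (F.obj j).toSemiMackey (colimST F).toSemiMackey where
  app X x := Quot.mk _ ⟨j, x⟩
  app_res _ _ := rfl
  app_tr _ _ := rfl

/-- The directed colimit as a Tambara functor. -/
noncomputable def colimTamb : Tambara G where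
  toSemiTambara := colimST F
  hasNeg X x := by
    induction x using Quot.ind with
    | _ p =>
      obtain ⟨y, hy⟩ := (F.obj p.1).hasNeg X p.2
      refine ⟨(iotaSM F p.1).app X y, ?_⟩
      have h1 := (iotaSM F p.1).app_add p.2 y
      have h2 := (iotaSM F p.1).app_zero X
      exact ((h1.symm.trans (congrArg ((iotaSM F p.1).app X) hy)).trans h2)

/-- The insertion of a stage into the directed colimit, as a map of Tambara
functors. -/
noncomputable def iotaT (j : J) : F.obj j ⟶ colimTamb F :=
  show STambHom (F.obj j).toSemiTambara (colimST F) from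
    { toSMackHom := iotaSM F j
      app_nm := fun _ _ => rfl }

/-- The colimiting cocone on a directed system of Tambara functors. -/
noncomputable def colimCocone : Cocone F where
  pt := colimTamb F
  ι :=
    { app := fun j => iotaT F j
      naturality := fun j k h => by
        refine STambHom.extH (funext fun X => funext fun x => ?_)
        show Quot.mk (DStep F X) ⟨k, (tapp (F.map h)).app X x⟩ = Quot.mk _ ⟨j, x⟩
        refine (Quot.sound ⟨leOfHom h, ?_⟩).symm
        show (tapp (F.map (homOfLE (leOfHom h)))).app X x = _
        have h2 : homOfLE (leOfHom h) = h := Subsingleton.elim _ _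
        rw [h2] }

/-- Descent from the directed colimit, at the level of semi-Mackey functors. -/
def colimDescSM (s : Cocone (F ⋙ forgetTM G)) :
    SMackHom (colimST F).toSemiMackey s.pt.toSemiMackey where
  app X := Quot.lift (fun p => (mapp (s.ι.app p.1)).app X p.2)
    (fun p q ⟨h, e⟩ => by
      have h2 : SMackHom.compH ((forgetTM G).map (F.map (homOfLE h))) (s.ι.app q.1)
          = SMackHom.compH (s.ι.app p.1) (SMackHom.idH _) := s.ι.naturality (homOfLE h)
      have h3 := congrArg (fun t => SMackHom.app t X p.2) h2
      show (mapp (s.ι.app p.1)).app X p.2 = (mapp (s.ι.app q.1)).app X q.2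
      rw [← e]
      exact h3.symm)
  app_res {X Y} u y := by
    induction y using Quot.ind with
    | _ p => exact (mapp (s.ι.app p.1)).app_res u p.2
  app_tr {X Y} u x := by
    induction x using Quot.ind with
    | _ p => exact (mapp (s.ι.app p.1)).app_tr u p.2

/-- Descent from the directed colimit, at the level of Tambara functors. -/
def colimDescT (s : Cocone F) : colimTamb F ⟶ s.pt :=
  show STambHom (colimST F) s.pt.toSemiTambara from
    { app := fun X => Quot.lift (fun p => (tapp (s.ι.app p.1)).app X p.2)
        (fun p q ⟨h, e⟩ => by
          have h2 : STambHom.compH (tapp (F.map (homOfLE h))) (tapp (s.ι.app q.1))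
              = STambHom.compH (tapp (s.ι.app p.1)) (STambHom.idH _) :=
            s.ι.naturality (homOfLE h)
          have h3 := congrArg (fun t => SMackHom.app t.toSMackHom _ p.2) h2
          show (tapp (s.ι.app p.1)).app X p.2 = (tapp (s.ι.app q.1)).app X q.2
          rw [← e]
          exact h3.symm)
      app_res := fun {X Y} u y => by
        induction y using Quot.ind with
        | _ p => exact (tapp (s.ι.app p.1)).app_res u p.2
      app_tr := fun {X Y} u x => by
        induction x using Quot.ind with
        | _ p => exact (tapp (s.ι.app p.1)).app_tr u p.2
      app_nm := fun {X Y} u x => by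
        induction x using Quot.ind with
        | _ p => exact (tapp (s.ι.app p.1)).app_nm u p.2 }

/-- The directed colimit cocone is a colimit in `Tamb(G)`. -/
noncomputable def colimIsColimit : IsColimit (colimCocone F) where
  desc s := colimDescT F s
  fac s j := STambHom.extH rfl
  uniq s m w := by
    refine STambHom.extH (funext fun X => funext fun z => ?_)
    induction z using Quot.ind with
    | _ p =>
      exact congrArg (fun t => SMackHom.app (STambHom.toSMackHom t) X p.2) (w p.1)

/-- The image of the directed colimit cocone in `Mack(G)` is a colimit. -/
noncomputable def colimMapIsColimit :
    IsColimit ((forgetTM G).mapCocone (colimCocone F)) where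
  desc s := colimDescSM F s
  fac s j := SMackHom.extH rfl
  uniq s m w := by
    refine SMackHom.extH (funext fun X => funext fun z => ?_)
    induction z using Quot.ind with
    | _ p => exact congrArg (fun t => SMackHom.app t X p.2) (w p.1)

/-- The forgetful functor creates directed colimits. -/
noncomputable def createsDirected : CreatesColimit F (forgetTM G) :=
  createsColimitOfReflectsIso fun c t =>
    { liftedCocone := colimCocone F
      validLift := IsColimit.uniqueUpToIso (colimMapIsColimit F) t
      makesColimit := colimIsColimit F }

end Directed

section Coeq

variable {A B : Tambara G} (f g : A ⟶ B)

/-- The one-step relation defining the coequalizer of `f` and `g`. -/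
def CoRel (X : FinGSet G) (b b' : B.obj X) : Prop :=
  ∃ a : A.obj X, (tapp f).app X a = b ∧ (tapp g).app X a = b'

variable (σ : B ⟶ A) (hσf : σ ≫ f = 𝟙 B) (hσg : σ ≫ g = 𝟙 B)

include hσf in
theorem tapp_section_f (X : FinGSet G) (b : B.obj X) :
    (tapp f).app X ((tapp σ).app X b) = b :=
  congrArg (fun t => SMackHom.app (STambHom.toSMackHom t) X b) hσf

include hσg in
theorem tapp_section_g (X : FinGSet G) (b : B.obj X) :
    (tapp g).app X ((tapp σ).app X b) = b :=
  congrArg (fun t => SMackHom.app (STambHom.toSMackHom t) X b) hσg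

include hσf hσg in
theorem corel_refl (X : FinGSet G) (b : B.obj X) : CoRel f g X b b :=
  ⟨(tapp σ).app X b, tapp_section_f f σ hσf X b, tapp_section_g g σ hσg X b⟩

include hσf hσg in
theorem mk_pair_left {X Y : FinGSet G} (c : B.obj Y) {b b' : B.obj X}
    (h : Quot.mk (CoRel f g X) b = Quot.mk (CoRel f g X) b') :
    Quot.mk (CoRel f g (sumG X Y)) (B.toSemiMackey.pairElt b c)
      = Quot.mk (CoRel f g (sumG X Y)) (B.toSemiMackey.pairElt b' c) :=
  congrArg (Quot.lift
    (fun b => Quot.mk (CoRel f g (sumG X Y)) (B.toSemiMackey.pairElt b c))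
    (fun b b' ⟨a, ha1, ha2⟩ => Quot.sound
      ⟨A.toSemiMackey.pairElt a ((tapp σ).app Y c),
        by rw [SMackHom.app_pairElt, ha1, tapp_section_f f σ hσf],
        by rw [SMackHom.app_pairElt, ha2, tapp_section_g g σ hσg]⟩)) h

include hσf hσg in
theorem mk_pair_right {X Y : FinGSet G} (b : B.obj X) {c c' : B.obj Y}
    (h : Quot.mk (CoRel f g Y) c = Quot.mk (CoRel f g Y) c') :
    Quot.mk (CoRel f g (sumG X Y)) (B.toSemiMackey.pairElt b c)
      = Quot.mk (CoRel f g (sumG X Y)) (B.toSemiMackey.pairElt b c') :=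
  congrArg (Quot.lift
    (fun c => Quot.mk (CoRel f g (sumG X Y)) (B.toSemiMackey.pairElt b c))
    (fun c c' ⟨a, ha1, ha2⟩ => Quot.sound
      ⟨A.toSemiMackey.pairElt ((tapp σ).app X b) a,
        by rw [SMackHom.app_pairElt, ha1, tapp_section_f f σ hσf],
        by rw [SMackHom.app_pairElt, ha2, tapp_section_g g σ hσg]⟩)) h

/-- The coequalizer of a reflexive pair of maps of Tambara functors, as a
semi-Tambara functor. -/
def coeqST : SemiTambara G where
  obj X := Quot (CoRel f g X)
  nonempty X := ⟨Quot.mk _ (B.nonempty X).some⟩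
  res {X Y} u := Quot.lift (fun b => Quot.mk _ (B.res u b))
    (fun b b' ⟨a, e1, e2⟩ => Quot.sound ⟨A.res u a,
      by rw [(tapp f).app_res, e1], by rw [(tapp g).app_res, e2]⟩)
  tr {X Y} u := Quot.lift (fun b => Quot.mk _ (B.tr u b))
    (fun b b' ⟨a, e1, e2⟩ => Quot.sound ⟨A.tr u a,
      by rw [(tapp f).app_tr, e1], by rw [(tapp g).app_tr, e2]⟩)
  nm {X Y} u := Quot.lift (fun b => Quot.mk _ (B.nm u b))
    (fun b b' ⟨a, e1, e2⟩ => Quot.sound ⟨A.nm u a,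
      by rw [(tapp f).app_nm, e1], by rw [(tapp g).app_nm, e2]⟩)
  res_id {X} x := by
    induction x using Quot.ind with
    | _ b => exact congrArg (Quot.mk _) (B.res_id b)
  res_comp {X Y Z} i j z := by
    induction z using Quot.ind with
    | _ b => exact congrArg (Quot.mk _) (B.res_comp i j b)
  tr_id {X} x := by
    induction x using Quot.ind with
    | _ b => exact congrArg (Quot.mk _) (B.tr_id b)
  tr_comp {X Y Z} i j x := by
    induction x using Quot.ind with
    | _ b => exact congrArg (Quot.mk _) (B.tr_comp i j b)
  nm_id {X} x := by
    induction x using Quot.ind with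
    | _ b => exact congrArg (Quot.mk _) (B.nm_id b)
  nm_comp {X Y Z} i j x := by
    induction x using Quot.ind with
    | _ b => exact congrArg (Quot.mk _) (B.nm_comp i j b)
  mackey {X Y Z} j i y := by
    induction y using Quot.ind with
    | _ b => exact congrArg (Quot.mk _) (B.mackey j i b)
  nm_res {X Y Z} j i y := by
    induction y using Quot.ind with
    | _ b => exact congrArg (Quot.mk _) (B.nm_res j i b)
  distrib {X Y Z U V} i j u v w hd x := by
    induction x using Quot.ind with
    | _ b => exact congrArg (Quot.mk _) (B.distrib i j u v w hd b)
  empty_subsingleton := by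
    constructor
    intro a b
    induction a using Quot.ind with
    | _ p =>
      induction b using Quot.ind with
      | _ q =>
        haveI := B.empty_subsingleton
        exact congrArg (Quot.mk _) (Subsingleton.elim p q)
  sum_bij X Y := by
    constructor
    · intro z z'
      induction z using Quot.ind with
      | _ b =>
        induction z' using Quot.ind with
        | _ b' =>
          intro h
          have e1 : Quot.mk (CoRel f g X) (B.res (inlHom X Y) b)
              = Quot.mk (CoRel f g X) (B.res (inlHom X Y) b') := congrArg Prod.fst h
          have e2 : Quot.mk (CoRel f g Y) (B.res (inrHom X Y) b)
              = Quot.mk (CoRel f g Y) (B.res (inrHom X Y) b') := congrArg Prod.snd h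
          calc Quot.mk (CoRel f g (sumG X Y)) b
              = Quot.mk _ (B.toSemiMackey.pairElt (B.res (inlHom X Y) b)
                  (B.res (inrHom X Y) b)) := by rw [B.toSemiMackey.pair_res]
            _ = Quot.mk _ (B.toSemiMackey.pairElt (B.res (inlHom X Y) b')
                  (B.res (inrHom X Y) b)) := mk_pair_left f g σ hσf hσg _ e1
            _ = Quot.mk _ (B.toSemiMackey.pairElt (B.res (inlHom X Y) b')
                  (B.res (inrHom X Y) b')) := mk_pair_right f g σ hσf hσg _ e2
            _ = Quot.mk (CoRel f g (sumG X Y)) b' := by rw [B.toSemiMackey.pair_res]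
    · rintro ⟨w1, w2⟩
      induction w1 using Quot.ind with
      | _ b =>
        induction w2 using Quot.ind with
        | _ c =>
          refine ⟨Quot.mk _ (B.toSemiMackey.pairElt b c), Prod.ext ?_ ?_⟩
          · show Quot.mk (CoRel f g X) (B.res (inlHom X Y) _) = _
            rw [B.toSemiMackey.res_inl_pair]
          · show Quot.mk (CoRel f g Y) (B.res (inrHom X Y) _) = _
            rw [B.toSemiMackey.res_inr_pair]

/-- The quotient map onto the coequalizer, as a map of semi-Mackey functors. -/
def coeqPiSM : SMackHom B.toSemiMackey (coeqST f g σ hσf hσg).toSemiMackey where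
  app X b := Quot.mk _ b
  app_res _ _ := rfl
  app_tr _ _ := rfl

/-- The coequalizer of a reflexive pair, as a Tambara functor. -/
def coeqTamb : Tambara G where
  toSemiTambara := coeqST f g σ hσf hσg
  hasNeg X x := by
    induction x using Quot.ind with
    | _ b =>
      obtain ⟨y, hy⟩ := B.hasNeg X b
      refine ⟨(coeqPiSM f g σ hσf hσg).app X y, ?_⟩
      exact ((coeqPiSM f g σ hσf hσg).app_add b y).symm.trans
        ((congrArg ((coeqPiSM f g σ hσf hσg).app X) hy).trans
          ((coeqPiSM f g σ hσf hσg).app_zero X))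

/-- The quotient map onto the coequalizer, as a map of Tambara functors. -/
def coeqPiT : B ⟶ coeqTamb f g σ hσf hσg :=
  show STambHom B.toSemiTambara (coeqST f g σ hσf hσg) from
    { toSMackHom := coeqPiSM f g σ hσf hσg
      app_nm := fun _ _ => rfl }

theorem coeqPi_coequalizes : f ≫ coeqPiT f g σ hσf hσg = g ≫ coeqPiT f g σ hσf hσg :=
  STambHom.extH (funext fun X => funext fun a => Quot.sound ⟨a, rfl, rfl⟩)

/-- The coequalizer cocone on a reflexive pair of maps of Tambara functors. -/
def coeqCocone : Cocone (parallelPair f g) where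
  pt := coeqTamb f g σ hσf hσg
  ι :=
    { app := fun j => WalkingParallelPair.casesOn j
        (f ≫ coeqPiT f g σ hσf hσg) (coeqPiT f g σ hσf hσg)
      naturality := by
        intro i j h
        change WalkingParallelPairHom i j at h
        cases h with
        | left => show f ≫ _ = (f ≫ _) ≫ 𝟙 _; rw [Category.comp_id]
        | right =>
          show g ≫ _ = (f ≫ _) ≫ 𝟙 _
          rw [Category.comp_id, coeqPi_coequalizes f g σ hσf hσg]
        | id => simp }

section CoeqDesc

theorem cofork_condition_f (s : Cocone (parallelPair f g)) :
    f ≫ s.ι.app WalkingParallelPair.one = s.ι.app WalkingParallelPair.zero :=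
  s.w WalkingParallelPairHom.left

theorem cofork_condition_g (s : Cocone (parallelPair f g)) :
    g ≫ s.ι.app WalkingParallelPair.one = s.ι.app WalkingParallelPair.zero :=
  s.w WalkingParallelPairHom.right

/-- Descent from the coequalizer of Tambara functors. -/
def coeqDescT (s : Cocone (parallelPair f g)) : coeqTamb f g σ hσf hσg ⟶ s.pt :=
  show STambHom (coeqST f g σ hσf hσg) s.pt.toSemiTambara from
    { app := fun X => Quot.lift ((tapp (s.ι.app WalkingParallelPair.one)).app X)
        (fun b b' ⟨a, e1, e2⟩ => by
          have h := congrArg (fun t => SMackHom.app (STambHom.toSMackHom t) X a)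
            ((cofork_condition_f f g s).trans (cofork_condition_g f g s).symm)
          rw [← e1, ← e2]
          exact h)
      app_res := fun {X Y} u y => by
        induction y using Quot.ind with
        | _ b => exact (tapp (s.ι.app WalkingParallelPair.one)).app_res u b
      app_tr := fun {X Y} u x => by
        induction x using Quot.ind with
        | _ b => exact (tapp (s.ι.app WalkingParallelPair.one)).app_tr u b
      app_nm := fun {X Y} u x => by
        induction x using Quot.ind with
        | _ b => exact (tapp (s.ι.app WalkingParallelPair.one)).app_nm u b }

/-- The coequalizer cocone is a colimit in `Tamb(G)`. -/
def coeqIsColimit : IsColimit (coeqCocone f g σ hσf hσg) where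
  desc s := coeqDescT f g σ hσf hσg s
  fac s j := by
    cases j with
    | one => exact STambHom.extH rfl
    | zero =>
      have h : coeqPiT f g σ hσf hσg ≫ coeqDescT f g σ hσf hσg s
          = s.ι.app WalkingParallelPair.one := STambHom.extH rfl
      show (f ≫ coeqPiT f g σ hσf hσg) ≫ _ = _
      rw [Category.assoc, h, cofork_condition_f f g s]
  uniq s m w := by
    refine STambHom.extH (funext fun X => funext fun z => ?_)
    induction z using Quot.ind with
    | _ b =>
      exact congrArg (fun t => SMackHom.app (STambHom.toSMackHom t) X b)
        (w WalkingParallelPair.one)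

/-- Descent from the coequalizer at the level of Mackey functors. -/
def coeqDescSM (s : Cocone (parallelPair f g ⋙ forgetTM G)) :
    SMackHom (coeqST f g σ hσf hσg).toSemiMackey s.pt.toSemiMackey where
  app X := Quot.lift ((mapp (s.ι.app WalkingParallelPair.one)).app X)
    (fun b b' ⟨a, e1, e2⟩ => by
      have hf := s.w WalkingParallelPairHom.left
      have hg := s.w WalkingParallelPairHom.right
      have h := congrArg (fun t => SMackHom.app t X a) (hf.trans hg.symm)
      rw [← e1, ← e2]
      exact h)
  app_res {X Y} u y := by
    induction y using Quot.ind with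
    | _ b => exact (mapp (s.ι.app WalkingParallelPair.one)).app_res u b
  app_tr {X Y} u x := by
    induction x using Quot.ind with
    | _ b => exact (mapp (s.ι.app WalkingParallelPair.one)).app_tr u b

/-- The image of the coequalizer cocone in `Mack(G)` is a colimit. -/
def coeqMapIsColimit :
    IsColimit ((forgetTM G).mapCocone (coeqCocone f g σ hσf hσg)) where
  desc s := coeqDescSM f g σ hσf hσg s
  fac s j := by
    cases j with
    | one => exact SMackHom.extH rfl
    | zero =>
      have h : (forgetTM G).map (coeqPiT f g σ hσf hσg) ≫ coeqDescSM f g σ hσf hσg s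
          = s.ι.app WalkingParallelPair.one := SMackHom.extH rfl
      have hf := s.w WalkingParallelPairHom.left
      show ((forgetTM G).map (f ≫ coeqPiT f g σ hσf hσg)) ≫ _ = _
      refine Eq.trans ?_ hf
      exact SMackHom.extH rfl
  uniq s m w := by
    refine SMackHom.extH (funext fun X => funext fun z => ?_)
    induction z using Quot.ind with
    | _ b =>
      exact congrArg (fun t => SMackHom.app t X b) (w WalkingParallelPair.one)

/-- The forgetful functor creates reflexive coequalizers. -/
noncomputable def createsCoeq : CreatesColimit (parallelPair f g) (forgetTM G) :=
  createsColimitOfReflectsIso fun c t =>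
    { liftedCocone := coeqCocone f g σ hσf hσg
      validLift := IsColimit.uniqueUpToIso (coeqMapIsColimit f g σ hσf hσg) t
      makesColimit := coeqIsColimit f g σ hσf hσg }

end CoeqDesc

end Coeq

end Statement10Aux

/-- Direct limits (colimits of directed systems) and reflexive
coequalizers exist in the category `Tamb(G)` of Tambara functors and are created by the
forgetful functor to `Mack(G)`; consequently any free Tambara functor functor, i.e. any
left adjoint `T` of the forgetful functor, preserves direct limits and reflexive
coequalizers. -/
theorem statement10 (G : Type) [Group G] [Finite G] :
    (∀ (J : Type) [Preorder J] [IsDirected J (· ≤ ·)] [Nonempty J],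
      Nonempty (CreatesColimitsOfShape J (forgetTM G)) ∧
        HasColimitsOfShape J (Tambara G)) ∧
    (∀ {A B : Tambara G} (f g : A ⟶ B), IsReflexivePair f g →
      Nonempty (CreatesColimit (parallelPair f g) (forgetTM G)) ∧
        HasColimit (parallelPair f g)) ∧
    (∀ (T : Mackey G ⥤ Tambara G), (T ⊣ forgetTM G) →
      (∀ (J : Type) [Preorder J] [IsDirected J (· ≤ ·)] [Nonempty J],
        Nonempty (PreservesColimitsOfShape J T)) ∧
      (∀ {A B : Mackey G} (f g : A ⟶ B), IsReflexivePair f g →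
        Nonempty (PreservesColimit (parallelPair f g) T))) := by
  refine ⟨?_, ?_, ?_⟩
  · intro J _ _ _
    exact ⟨⟨{ CreatesColimit := fun {K} => createsDirected K }⟩,
      ⟨fun K => HasColimit.mk ⟨_, colimIsColimit K⟩⟩⟩
  · intro A B f g hr
    obtain ⟨σ, hσf, hσg⟩ := hr.common_section'
    exact ⟨⟨createsCoeq f g σ hσf hσg⟩,
      HasColimit.mk ⟨_, coeqIsColimit f g σ hσf hσg⟩⟩
  · intro T adj
    haveI := Adjunction.leftAdjoint_preservesColimits.{0, 0} adj
    exact ⟨fun J _ _ _ => ⟨inferInstance⟩, fun f g _ => ⟨inferInstance⟩⟩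

end Tamb
end
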